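/- arXiv:1510.00027 — 6 statements merged into one kernel-verified Lean document; each statement's English description precedes it below -/
import Mathlib

section
/- Global reliability identity for the H(curl) error estimator (Theorem 4.1, global bound): Let (u, cu), (u_T, cu_T), (σ, cσ), (σ_T, cσ_T) be curl pairs and let f be a square-ν-integrable vector field. Assume (i) σ = μ⁻¹ cu holds ν-a.e. on Ω (the constitutive relation defining the magnetizing field), (ii) cσ + β u = f holds ν-a.e. on Ω (the magnetizing-field equation), and (iii) the integration-by-parts identity ∫ (σ − σ_T)·(cu − cu_T) dν = ∫ (cσ − cσ_T)·(u − u_T) dν holds (as satisfied by the errors of conforming approximations with vanishing tangential traces on the respective boundary parts). Then the estimator satisfies the exact identity η² = |||u − u_T|||²_{μ,β} + |||σ − σ_T|||²_{β,μ}, i.e. ∫ μ⁻¹|μ σ_T − cu_T|² dν + ∫ β⁻¹|cσ_T + β u_T − f|² dν = ∫ (μ⁻¹|cu − cu_T|² + β|u − u_T|²) dν + ∫ (β⁻¹|cσ − cσ_T|² + μ|σ − σ_T|²) dν. -/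
open MeasureTheory RealInnerProductSpace

private lemma integrable_inner_of_memL2 {Ω : Type*} [MeasurableSpace Ω] {ν : Measure Ω}
    {v w : Ω → EuclideanSpace ℝ (Fin 3)} (hv : MemLp v 2 ν) (hw : MemLp w 2 ν) :
    Integrable (fun x => ⟪v x, w x⟫) ν := by
  have hvsq : Integrable (fun x => ‖v x‖ ^ 2) ν :=
    (memLp_two_iff_integrable_sq_norm hv.aestronglyMeasurable).mp hv
  have hwsq : Integrable (fun x => ‖w x‖ ^ 2) ν :=
    (memLp_two_iff_integrable_sq_norm hw.aestronglyMeasurable).mp hw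
  refine Integrable.mono' ((hvsq.add hwsq).const_mul (1/2 : ℝ))
    (hv.aestronglyMeasurable.inner hw.aestronglyMeasurable) ?_
  filter_upwards with x
  calc ‖⟪v x, w x⟫‖ ≤ ‖v x‖ * ‖w x‖ := norm_inner_le_norm _ _
    _ ≤ (1/2 : ℝ) * (‖v x‖ ^ 2 + ‖w x‖ ^ 2) := by nlinarith [sq_nonneg (‖v x‖ - ‖w x‖)]

private lemma integrable_wsq {Ω : Type*} [MeasurableSpace Ω] {ν : Measure Ω}
    {w : Ω → ℝ} {c : ℝ} (hwmeas : Measurable w) (hwbd : ∀ᵐ x ∂ν, ‖w x‖ ≤ c)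
    {v : Ω → EuclideanSpace ℝ (Fin 3)} (hv : MemLp v 2 ν) :
    Integrable (fun x => w x * ‖v x‖ ^ 2) ν := by
  have hvsq : Integrable (fun x => ‖v x‖ ^ 2) ν :=
    (memLp_two_iff_integrable_sq_norm hv.aestronglyMeasurable).mp hv
  exact hvsq.bdd_mul hwmeas.aestronglyMeasurable hwbd

/-- Global reliability identity for the H(curl) error estimator (Theorem 4.1,
global bound): under the constitutive relation `σ = μ⁻¹ cu`, the magnetizing-field
equation `cσ + β u = f`, and the integration-by-parts identity for the errors,
the estimator equals exactly the sum of the two squared weighted energy errors. -/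
theorem estimator_global_reliability_identity
    {Ω : Type*} [MeasurableSpace Ω] (ν : Measure Ω)
    (μ β : Ω → ℝ) (m₁ m₂ b₁ b₂ : ℝ)
    (hm₁ : 0 < m₁) (hm₁₂ : m₁ ≤ m₂) (hb₁ : 0 < b₁) (hb₁₂ : b₁ ≤ b₂)
    (hμmeas : Measurable μ) (hβmeas : Measurable β)
    (hμbd : ∀ᵐ x ∂ν, m₁ ≤ μ x ∧ μ x ≤ m₂)
    (hβbd : ∀ᵐ x ∂ν, b₁ ≤ β x ∧ β x ≤ b₂)
    (u cu uT cuT σ cσ σT cσT f : Ω → EuclideanSpace ℝ (Fin 3))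
    (hu : MemLp u 2 ν) (hcu : MemLp cu 2 ν)
    (huT : MemLp uT 2 ν) (hcuT : MemLp cuT 2 ν)
    (hσ : MemLp σ 2 ν) (hcσ : MemLp cσ 2 ν)
    (hσT : MemLp σT 2 ν) (hcσT : MemLp cσT 2 ν)
    (hf : MemLp f 2 ν)
    -- (i) constitutive relation defining the magnetizing field
    (hconst : ∀ᵐ x ∂ν, σ x = (μ x)⁻¹ • cu x)
    -- (ii) magnetizing-field equation
    (hmageq : ∀ᵐ x ∂ν, cσ x + β x • u x = f x)
    -- (iii) integration-by-parts identity for the errors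
    (hibp : ∫ x, ⟪σ x - σT x, cu x - cuT x⟫ ∂ν
          = ∫ x, ⟪cσ x - cσT x, u x - uT x⟫ ∂ν) :
    (∫ x, (μ x)⁻¹ * ‖μ x • σT x - cuT x‖ ^ 2 ∂ν)
      + ∫ x, (β x)⁻¹ * ‖cσT x + β x • uT x - f x‖ ^ 2 ∂ν
    = (∫ x, ((μ x)⁻¹ * ‖cu x - cuT x‖ ^ 2 + β x * ‖u x - uT x‖ ^ 2) ∂ν)
      + ∫ x, ((β x)⁻¹ * ‖cσ x - cσT x‖ ^ 2 + μ x * ‖σ x - σT x‖ ^ 2) ∂ν := by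
  -- boundedness of the weights
  have hμinv : ∀ᵐ x ∂ν, ‖(μ x)⁻¹‖ ≤ m₁⁻¹ := by
    filter_upwards [hμbd] with x ⟨h1, _⟩
    have : 0 < μ x := lt_of_lt_of_le hm₁ h1
    rw [Real.norm_eq_abs, abs_of_pos (inv_pos.mpr this)]
    exact inv_anti₀ hm₁ h1
  have hμb : ∀ᵐ x ∂ν, ‖μ x‖ ≤ m₂ := by
    filter_upwards [hμbd] with x ⟨h1, h2⟩
    rw [Real.norm_eq_abs, abs_of_pos (lt_of_lt_of_le hm₁ h1)]; exact h2
  have hβinv : ∀ᵐ x ∂ν, ‖(β x)⁻¹‖ ≤ b₁⁻¹ := by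
    filter_upwards [hβbd] with x ⟨h1, _⟩
    have : 0 < β x := lt_of_lt_of_le hb₁ h1
    rw [Real.norm_eq_abs, abs_of_pos (inv_pos.mpr this)]
    exact inv_anti₀ hb₁ h1
  have hβb : ∀ᵐ x ∂ν, ‖β x‖ ≤ b₂ := by
    filter_upwards [hβbd] with x ⟨h1, h2⟩
    rw [Real.norm_eq_abs, abs_of_pos (lt_of_lt_of_le hb₁ h1)]; exact h2
  -- the integrable pieces
  have hA : Integrable (fun x => (μ x)⁻¹ * ‖cu x - cuT x‖ ^ 2) ν :=
    integrable_wsq hμmeas.inv hμinv (hcu.sub hcuT)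
  have hB : Integrable (fun x => μ x * ‖σ x - σT x‖ ^ 2) ν :=
    integrable_wsq hμmeas hμb (hσ.sub hσT)
  have hC : Integrable (fun x => ⟪σ x - σT x, cu x - cuT x⟫) ν :=
    integrable_inner_of_memL2 (hσ.sub hσT) (hcu.sub hcuT)
  have hD : Integrable (fun x => (β x)⁻¹ * ‖cσ x - cσT x‖ ^ 2) ν :=
    integrable_wsq hβmeas.inv hβinv (hcσ.sub hcσT)
  have hE : Integrable (fun x => β x * ‖u x - uT x‖ ^ 2) ν :=
    integrable_wsq hβmeas hβb (hu.sub huT)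
  have hF : Integrable (fun x => ⟪cσ x - cσT x, u x - uT x⟫) ν :=
    integrable_inner_of_memL2 (hcσ.sub hcσT) (hu.sub huT)
  -- pointwise identity for the first estimator term
  have key1 : ∀ᵐ x ∂ν, (μ x)⁻¹ * ‖μ x • σT x - cuT x‖ ^ 2
      = (μ x)⁻¹ * ‖cu x - cuT x‖ ^ 2 + μ x * ‖σ x - σT x‖ ^ 2
        - 2 * ⟪σ x - σT x, cu x - cuT x⟫ := by
    filter_upwards [hμbd, hconst] with x ⟨h1, _⟩ hc
    have hμpos : 0 < μ x := lt_of_lt_of_le hm₁ h1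
    have hμne : μ x ≠ 0 := ne_of_gt hμpos
    have hrw : μ x • σT x - cuT x = (cu x - cuT x) - μ x • (σ x - σT x) := by
      rw [hc, smul_sub, smul_inv_smul₀ hμne]; abel
    rw [hrw, @norm_sub_sq_real]
    rw [real_inner_smul_right, norm_smul, mul_pow, real_inner_comm]
    have h1 : ‖μ x‖ ^ 2 = μ x * μ x := by
      rw [Real.norm_eq_abs, sq_abs]; ring
    rw [h1]
    field_simp
    ring
  -- pointwise identity for the second estimator term
  have key2 : ∀ᵐ x ∂ν, (β x)⁻¹ * ‖cσT x + β x • uT x - f x‖ ^ 2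
      = (β x)⁻¹ * ‖cσ x - cσT x‖ ^ 2 + β x * ‖u x - uT x‖ ^ 2
        + 2 * ⟪cσ x - cσT x, u x - uT x⟫ := by
    filter_upwards [hβbd, hmageq] with x ⟨h1, _⟩ hm
    have hβpos : 0 < β x := lt_of_lt_of_le hb₁ h1
    have hβne : β x ≠ 0 := ne_of_gt hβpos
    have hrw : cσT x + β x • uT x - f x = -((cσ x - cσT x) + β x • (u x - uT x)) := by
      rw [← hm, smul_sub]; abel
    rw [hrw, norm_neg, @norm_add_sq_real]
    rw [real_inner_smul_right, norm_smul, mul_pow]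
    have h1 : ‖β x‖ ^ 2 = β x * β x := by
      rw [Real.norm_eq_abs, sq_abs]; ring
    rw [h1]
    field_simp
    ring
  rw [integral_congr_ae key1, integral_congr_ae key2]
  have hAB : Integrable (fun x => (μ x)⁻¹ * ‖cu x - cuT x‖ ^ 2
      + μ x * ‖σ x - σT x‖ ^ 2) ν := hA.add hB
  have hDE : Integrable (fun x => (β x)⁻¹ * ‖cσ x - cσT x‖ ^ 2
      + β x * ‖u x - uT x‖ ^ 2) ν := hD.add hE
  have hC2 : Integrable (fun x => 2 * ⟪σ x - σT x, cu x - cuT x⟫) ν := hC.const_mul 2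
  have hF2 : Integrable (fun x => 2 * ⟪cσ x - cσT x, u x - uT x⟫) ν := hF.const_mul 2
  rw [integral_sub hAB hC2, integral_add hA hB,
    integral_add hDE hF2, integral_add hD hE,
    integral_add hA hE, integral_add hD hB,
    integral_const_mul, integral_const_mul, hibp]
  ring
end

section
/- Local efficiency of the indicator (Theorem 4.1, local bound, with the constant made explicit): Let (u, cu), (u_T, cu_T), (σ, cσ), (σ_T, cσ_T) be curl pairs and f square-ν-integrable, and assume the constitutive relations σ = μ⁻¹ cu and cσ + β u = f hold ν-a.e. on Ω. Then for every ν-measurable subset K ⊆ Ω, the local indicator η_K² := ∫_K μ⁻¹|μ σ_T − cu_T|² dν + ∫_K β⁻¹|cσ_T + β u_T − f|² dν satisfies η_K² ≤ 2 ( ∫_K (μ⁻¹|cu − cu_T|² + β|u − u_T|²) dν + ∫_K (β⁻¹|cσ − cσ_T|² + μ|σ − σ_T|²) dν ), i.e. η_K ≤ √2 (|||u − u_T|||²_{μ,β,K} + |||σ − σ_T|||²_{β,μ,K})^{1/2}. -/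
open MeasureTheory RealInnerProductSpace

private lemma pt_bound {E : Type*} [NormedAddCommGroup E] [NormedSpace ℝ E]
    (a b : E) (w : ℝ) (hw : 0 < w) :
    w⁻¹ * ‖w • a + b‖ ^ 2 ≤ 2 * (w⁻¹ * ‖b‖ ^ 2 + w * ‖a‖ ^ 2) := by
  have h1 : ‖w • a + b‖ ≤ w * ‖a‖ + ‖b‖ := by
    calc ‖w • a + b‖ ≤ ‖w • a‖ + ‖b‖ := norm_add_le _ _
    _ = w * ‖a‖ + ‖b‖ := by rw [norm_smul, Real.norm_eq_abs, abs_of_pos hw]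
  have h2 : (2:ℝ) * (w⁻¹ * ‖b‖ ^ 2 + w * ‖a‖ ^ 2)
      = w⁻¹ * (2 * (‖b‖ ^ 2 + (w * ‖a‖) ^ 2)) := by
    field_simp
  rw [h2]
  apply mul_le_mul_of_nonneg_left _ (inv_nonneg.mpr hw.le)
  nlinarith [norm_nonneg (w • a + b), norm_nonneg a, norm_nonneg b,
    sq_nonneg (w * ‖a‖ - ‖b‖), hw.le]

private lemma intble_mul {Ω : Type*} [MeasurableSpace Ω] {ν : Measure Ω}
    (w : Ω → ℝ) (hw : Measurable w) (C : ℝ) (hbd : ∀ᵐ x ∂ν, ‖w x‖ ≤ C)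
    (g : Ω → EuclideanSpace ℝ (Fin 3)) (hg : MemLp g 2 ν) :
    Integrable (fun x => w x * ‖g x‖ ^ 2) ν :=
  Integrable.bdd_mul hg.norm.integrable_sq hw.aestronglyMeasurable hbd

/-- Local efficiency of the indicator (Theorem 4.1, local bound, with explicit
constant): for every measurable K ⊆ Ω, the squared local indicator η_K² is
bounded by twice the sum of the squared local weighted energy errors. -/
theorem indicator_local_efficiency
    {Ω : Type*} [MeasurableSpace Ω] (ν : MeasureTheory.Measure Ω)
    (μ β : Ω → ℝ) (m₁ m₂ b₁ b₂ : ℝ)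
    (hm₁ : 0 < m₁) (hm₁₂ : m₁ ≤ m₂) (hb₁ : 0 < b₁) (hb₁₂ : b₁ ≤ b₂)
    (hμmeas : Measurable μ) (hβmeas : Measurable β)
    (hμbd : ∀ᵐ x ∂ν, m₁ ≤ μ x ∧ μ x ≤ m₂)
    (hβbd : ∀ᵐ x ∂ν, b₁ ≤ β x ∧ β x ≤ b₂)
    (u cu uT cuT σ cσ σT cσT f : Ω → EuclideanSpace ℝ (Fin 3))
    (hu : MemLp u 2 ν) (hcu : MemLp cu 2 ν)
    (huT : MemLp uT 2 ν) (hcuT : MemLp cuT 2 ν)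
    (hσ : MemLp σ 2 ν) (hcσ : MemLp cσ 2 ν)
    (hσT : MemLp σT 2 ν) (hcσT : MemLp cσT 2 ν)
    (hf : MemLp f 2 ν)
    (hconst : ∀ᵐ x ∂ν, σ x = (μ x)⁻¹ • cu x)
    (hmageq : ∀ᵐ x ∂ν, cσ x + β x • u x = f x)
    (K : Set Ω) (hK : MeasurableSet K) :
    (∫ x in K, (μ x)⁻¹ * ‖μ x • σT x - cuT x‖ ^ 2 ∂ν)
      + (∫ x in K, (β x)⁻¹ * ‖cσT x + β x • uT x - f x‖ ^ 2 ∂ν)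
    ≤ 2 * ((∫ x in K, ((μ x)⁻¹ * ‖cu x - cuT x‖ ^ 2 + β x * ‖u x - uT x‖ ^ 2) ∂ν)
      + (∫ x in K, ((β x)⁻¹ * ‖cσ x - cσT x‖ ^ 2 + μ x * ‖σ x - σT x‖ ^ 2) ∂ν)) := by
  -- a.e. bounds on weights
  have hμinv : ∀ᵐ x ∂ν, ‖(μ x)⁻¹‖ ≤ m₁⁻¹ := by
    filter_upwards [hμbd] with x ⟨h1, h2⟩
    rw [Real.norm_eq_abs, abs_of_nonneg (inv_nonneg.mpr ((hm₁.trans_le h1).le))]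
    exact inv_anti₀ hm₁ h1
  have hμub : ∀ᵐ x ∂ν, ‖μ x‖ ≤ m₂ := by
    filter_upwards [hμbd] with x ⟨h1, h2⟩
    rw [Real.norm_eq_abs, abs_of_pos (hm₁.trans_le h1)]; exact h2
  have hβinv : ∀ᵐ x ∂ν, ‖(β x)⁻¹‖ ≤ b₁⁻¹ := by
    filter_upwards [hβbd] with x ⟨h1, h2⟩
    rw [Real.norm_eq_abs, abs_of_nonneg (inv_nonneg.mpr ((hb₁.trans_le h1).le))]
    exact inv_anti₀ hb₁ h1
  have hβub : ∀ᵐ x ∂ν, ‖β x‖ ≤ b₂ := by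
    filter_upwards [hβbd] with x ⟨h1, h2⟩
    rw [Real.norm_eq_abs, abs_of_pos (hb₁.trans_le h1)]; exact h2
  -- integrability of the four RHS pieces (on ν)
  have hI1 : Integrable (fun x => (μ x)⁻¹ * ‖cu x - cuT x‖ ^ 2) ν :=
    intble_mul _ hμmeas.inv _ hμinv _ (hcu.sub hcuT)
  have hI2 : Integrable (fun x => β x * ‖u x - uT x‖ ^ 2) ν :=
    intble_mul _ hβmeas _ hβub _ (hu.sub huT)
  have hI3 : Integrable (fun x => (β x)⁻¹ * ‖cσ x - cσT x‖ ^ 2) ν :=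
    intble_mul _ hβmeas.inv _ hβinv _ (hcσ.sub hcσT)
  have hI4 : Integrable (fun x => μ x * ‖σ x - σT x‖ ^ 2) ν :=
    intble_mul _ hμmeas _ hμub _ (hσ.sub hσT)
  -- pointwise bound 1
  have hpt1 : ∀ᵐ x ∂ν, (μ x)⁻¹ * ‖μ x • σT x - cuT x‖ ^ 2
      ≤ 2 * ((μ x)⁻¹ * ‖cu x - cuT x‖ ^ 2 + μ x * ‖σ x - σT x‖ ^ 2) := by
    filter_upwards [hμbd, hconst] with x ⟨h1, _⟩ hc
    have hμ0 : 0 < μ x := hm₁.trans_le h1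
    have hkey : μ x • σT x - cuT x = μ x • (σT x - σ x) + (cu x - cuT x) := by
      have : μ x • σ x = cu x := by
        rw [hc, smul_smul, mul_inv_cancel₀ hμ0.ne', one_smul]
      rw [smul_sub, this]; abel
    rw [hkey, norm_sub_rev (σ x) (σT x)]
    exact pt_bound _ _ _ hμ0
  -- pointwise bound 2
  have hpt2 : ∀ᵐ x ∂ν, (β x)⁻¹ * ‖cσT x + β x • uT x - f x‖ ^ 2
      ≤ 2 * ((β x)⁻¹ * ‖cσ x - cσT x‖ ^ 2 + β x * ‖u x - uT x‖ ^ 2) := by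
    filter_upwards [hβbd, hmageq] with x ⟨h1, _⟩ hm
    have hβ0 : 0 < β x := hb₁.trans_le h1
    have hkey : cσT x + β x • uT x - f x = β x • (uT x - u x) + (cσT x - cσ x) := by
      rw [← hm, smul_sub]; abel
    rw [hkey, norm_sub_rev (u x) (uT x), norm_sub_rev (cσ x) (cσT x)]
    exact pt_bound _ _ _ hβ0
  -- AE strong measurability of LHS integrands
  have hA : AEStronglyMeasurable (fun x => (μ x)⁻¹ * ‖μ x • σT x - cuT x‖ ^ 2) ν := by
    apply AEStronglyMeasurable.mul (hμmeas.inv.aestronglyMeasurable)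
    exact (((hμmeas.aestronglyMeasurable.smul hσT.1).sub hcuT.1).norm.pow 2)
  have hB : AEStronglyMeasurable (fun x => (β x)⁻¹ * ‖cσT x + β x • uT x - f x‖ ^ 2) ν := by
    apply AEStronglyMeasurable.mul (hβmeas.inv.aestronglyMeasurable)
    exact (((hcσT.1.add (hβmeas.aestronglyMeasurable.smul huT.1)).sub hf.1).norm.pow 2)
  -- integrability of LHS integrands
  have hI14 : Integrable (fun x => 2 * ((μ x)⁻¹ * ‖cu x - cuT x‖ ^ 2 + μ x * ‖σ x - σT x‖ ^ 2)) ν := by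
    simpa using (hI1.add hI4).const_mul 2
  have hI32 : Integrable (fun x => 2 * ((β x)⁻¹ * ‖cσ x - cσT x‖ ^ 2 + β x * ‖u x - uT x‖ ^ 2)) ν := by
    simpa using (hI3.add hI2).const_mul 2
  have hIA : Integrable (fun x => (μ x)⁻¹ * ‖μ x • σT x - cuT x‖ ^ 2) ν := by
    apply Integrable.mono' hI14 hA
    filter_upwards [hpt1, hμbd] with x h ⟨h1, _⟩
    rw [Real.norm_eq_abs,
      abs_of_nonneg (mul_nonneg (inv_nonneg.mpr (hm₁.trans_le h1).le) (sq_nonneg _))]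
    exact h
  have hIB : Integrable (fun x => (β x)⁻¹ * ‖cσT x + β x • uT x - f x‖ ^ 2) ν := by
    apply Integrable.mono' hI32 hB
    filter_upwards [hpt2, hβbd] with x h ⟨h1, _⟩
    rw [Real.norm_eq_abs,
      abs_of_nonneg (mul_nonneg (inv_nonneg.mpr (hb₁.trans_le h1).le) (sq_nonneg _))]
    exact h
  -- now the set integrals
  have e1 : (∫ x in K, (μ x)⁻¹ * ‖μ x • σT x - cuT x‖ ^ 2 ∂ν)
      ≤ 2 * (∫ x in K, ((μ x)⁻¹ * ‖cu x - cuT x‖ ^ 2 + μ x * ‖σ x - σT x‖ ^ 2) ∂ν) := by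
    rw [← integral_const_mul]
    exact integral_mono_ae hIA.integrableOn hI14.integrableOn
      (ae_restrict_of_ae hpt1)
  have e2 : (∫ x in K, (β x)⁻¹ * ‖cσT x + β x • uT x - f x‖ ^ 2 ∂ν)
      ≤ 2 * (∫ x in K, ((β x)⁻¹ * ‖cσ x - cσT x‖ ^ 2 + β x * ‖u x - uT x‖ ^ 2) ∂ν) := by
    rw [← integral_const_mul]
    exact integral_mono_ae hIB.integrableOn hI32.integrableOn
      (ae_restrict_of_ae hpt2)
  have s1 : (∫ x in K, ((μ x)⁻¹ * ‖cu x - cuT x‖ ^ 2 + μ x * ‖σ x - σT x‖ ^ 2) ∂ν)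
      = (∫ x in K, (μ x)⁻¹ * ‖cu x - cuT x‖ ^ 2 ∂ν) + (∫ x in K, μ x * ‖σ x - σT x‖ ^ 2 ∂ν) :=
    integral_add hI1.integrableOn hI4.integrableOn
  have s2 : (∫ x in K, ((β x)⁻¹ * ‖cσ x - cσT x‖ ^ 2 + β x * ‖u x - uT x‖ ^ 2) ∂ν)
      = (∫ x in K, (β x)⁻¹ * ‖cσ x - cσT x‖ ^ 2 ∂ν) + (∫ x in K, β x * ‖u x - uT x‖ ^ 2 ∂ν) :=
    integral_add hI3.integrableOn hI2.integrableOn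
  have s3 : (∫ x in K, ((μ x)⁻¹ * ‖cu x - cuT x‖ ^ 2 + β x * ‖u x - uT x‖ ^ 2) ∂ν)
      = (∫ x in K, (μ x)⁻¹ * ‖cu x - cuT x‖ ^ 2 ∂ν) + (∫ x in K, β x * ‖u x - uT x‖ ^ 2 ∂ν) :=
    integral_add hI1.integrableOn hI2.integrableOn
  have s4 : (∫ x in K, ((β x)⁻¹ * ‖cσ x - cσT x‖ ^ 2 + μ x * ‖σ x - σT x‖ ^ 2) ∂ν)
      = (∫ x in K, (β x)⁻¹ * ‖cσ x - cσT x‖ ^ 2 ∂ν) + (∫ x in K, μ x * ‖σ x - σT x‖ ^ 2 ∂ν) :=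
    integral_add hI3.integrableOn hI4.integrableOn
  rw [s3, s4]
  rw [s1] at e1; rw [s2] at e2
  linarith
end

section
/- Expansion identity for the estimator with cross terms (identity (4.5)/(4.7) of the paper, localized): Let (u, cu), (u_T, cu_T), (σ, cσ), (σ_T, cσ_T) be curl pairs and f square-ν-integrable, and assume σ = μ⁻¹ cu and cσ + β u = f hold ν-a.e. on Ω. Write e = u − u_T, ce = cu − cu_T, E = σ − σ_T, cE = cσ − cσ_T. Then for every ν-measurable K ⊆ Ω, ∫_K μ⁻¹|μ σ_T − cu_T|² dν + ∫_K β⁻¹|cσ_T + β u_T − f|² dν = ∫_K (μ⁻¹|ce|² + β|e|²) dν + ∫_K (β⁻¹|cE|² + μ|E|²) dν − 2 ∫_K E·ce dν + 2 ∫_K cE·e dν. -/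
open MeasureTheory RealInnerProductSpace

private lemma inner_integrable_aux {Ω : Type*} [MeasurableSpace Ω] {ν : Measure Ω}
    {f g : Ω → EuclideanSpace ℝ (Fin 3)} (hf : MemLp f 2 ν) (hg : MemLp g 2 ν) :
    Integrable (fun x => ⟪f x, g x⟫) ν := by
  have h := L2.integrable_inner (𝕜 := ℝ) (hf.toLp f) (hg.toLp g)
  refine h.congr ?_
  filter_upwards [hf.coeFn_toLp, hg.coeFn_toLp] with x h1 h2
  rw [h1, h2]

private lemma wsq_integrable_aux {Ω : Type*} [MeasurableSpace Ω] {ν : Measure Ω}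
    {w : Ω → ℝ} {C : ℝ} (hw : Measurable w) (hwbd : ∀ᵐ x ∂ν, |w x| ≤ C)
    {g : Ω → EuclideanSpace ℝ (Fin 3)} (hg : MemLp g 2 ν) :
    Integrable (fun x => w x * ‖g x‖ ^ 2) ν :=
  hg.norm.integrable_sq.bdd_mul hw.aestronglyMeasurable
    (hwbd.mono fun x hx => by simpa using hx)

/-- Expansion identity for the estimator with cross terms (identity (4.5)/(4.7)
of the paper, localized to a measurable set K). -/
theorem estimator_expansion_identity
    {Ω : Type*} [MeasurableSpace Ω] (ν : MeasureTheory.Measure Ω)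
    (μ β : Ω → ℝ) (m₁ m₂ b₁ b₂ : ℝ)
    (hm₁ : 0 < m₁) (hm₁₂ : m₁ ≤ m₂) (hb₁ : 0 < b₁) (hb₁₂ : b₁ ≤ b₂)
    (hμmeas : Measurable μ) (hβmeas : Measurable β)
    (hμbd : ∀ᵐ x ∂ν, m₁ ≤ μ x ∧ μ x ≤ m₂)
    (hβbd : ∀ᵐ x ∂ν, b₁ ≤ β x ∧ β x ≤ b₂)
    (u cu uT cuT σ cσ σT cσT f : Ω → EuclideanSpace ℝ (Fin 3))
    (hu : MemLp u 2 ν) (hcu : MemLp cu 2 ν)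
    (huT : MemLp uT 2 ν) (hcuT : MemLp cuT 2 ν)
    (hσ : MemLp σ 2 ν) (hcσ : MemLp cσ 2 ν)
    (hσT : MemLp σT 2 ν) (hcσT : MemLp cσT 2 ν)
    (hf : MemLp f 2 ν)
    (hconst : ∀ᵐ x ∂ν, σ x = (μ x)⁻¹ • cu x)
    (hmageq : ∀ᵐ x ∂ν, cσ x + β x • u x = f x)
    (K : Set Ω) (hK : MeasurableSet K) :
    (∫ x in K, (μ x)⁻¹ * ‖μ x • σT x - cuT x‖ ^ 2 ∂ν)
      + (∫ x in K, (β x)⁻¹ * ‖cσT x + β x • uT x - f x‖ ^ 2 ∂ν)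
    = (∫ x in K, ((μ x)⁻¹ * ‖cu x - cuT x‖ ^ 2 + β x * ‖u x - uT x‖ ^ 2) ∂ν)
      + (∫ x in K, ((β x)⁻¹ * ‖cσ x - cσT x‖ ^ 2 + μ x * ‖σ x - σT x‖ ^ 2) ∂ν)
      - 2 * (∫ x in K, ⟪σ x - σT x, cu x - cuT x⟫ ∂ν)
      + 2 * (∫ x in K, ⟪cσ x - cσT x, u x - uT x⟫ ∂ν) := by
  -- differences are in L²
  have hce : MemLp (fun x => cu x - cuT x) 2 ν := hcu.sub hcuT
  have he : MemLp (fun x => u x - uT x) 2 ν := hu.sub huT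
  have hcE : MemLp (fun x => cσ x - cσT x) 2 ν := hcσ.sub hcσT
  have hE : MemLp (fun x => σ x - σT x) 2 ν := hσ.sub hσT
  -- bounds on the weights
  have hμinv : ∀ᵐ x ∂ν, |(μ x)⁻¹| ≤ m₁⁻¹ := by
    filter_upwards [hμbd] with x hx
    rw [abs_of_nonneg (inv_nonneg.2 (le_trans hm₁.le hx.1))]
    exact inv_anti₀ hm₁ hx.1
  have hμabs : ∀ᵐ x ∂ν, |μ x| ≤ m₂ := by
    filter_upwards [hμbd] with x hx
    rw [abs_of_nonneg (le_trans hm₁.le hx.1)]; exact hx.2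
  have hβinv : ∀ᵐ x ∂ν, |(β x)⁻¹| ≤ b₁⁻¹ := by
    filter_upwards [hβbd] with x hx
    rw [abs_of_nonneg (inv_nonneg.2 (le_trans hb₁.le hx.1))]
    exact inv_anti₀ hb₁ hx.1
  have hβabs : ∀ᵐ x ∂ν, |β x| ≤ b₂ := by
    filter_upwards [hβbd] with x hx
    rw [abs_of_nonneg (le_trans hb₁.le hx.1)]; exact hx.2
  -- integrability of all pieces (restricted to K)
  have i1 : Integrable (fun x => (μ x)⁻¹ * ‖cu x - cuT x‖ ^ 2) (ν.restrict K) :=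
    (wsq_integrable_aux hμmeas.inv hμinv hce).restrict
  have i2 : Integrable (fun x => β x * ‖u x - uT x‖ ^ 2) (ν.restrict K) :=
    (wsq_integrable_aux hβmeas hβabs he).restrict
  have i3 : Integrable (fun x => (β x)⁻¹ * ‖cσ x - cσT x‖ ^ 2) (ν.restrict K) :=
    (wsq_integrable_aux hβmeas.inv hβinv hcE).restrict
  have i4 : Integrable (fun x => μ x * ‖σ x - σT x‖ ^ 2) (ν.restrict K) :=
    (wsq_integrable_aux hμmeas hμabs hE).restrict
  have i5 : Integrable (fun x => ⟪σ x - σT x, cu x - cuT x⟫) (ν.restrict K) :=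
    (inner_integrable_aux hE hce).restrict
  have i6 : Integrable (fun x => ⟪cσ x - cσT x, u x - uT x⟫) (ν.restrict K) :=
    (inner_integrable_aux hcE he).restrict
  -- pointwise identities (a.e.)
  have hA : ∀ᵐ x ∂ν, (μ x)⁻¹ * ‖μ x • σT x - cuT x‖ ^ 2
      = (μ x)⁻¹ * ‖cu x - cuT x‖ ^ 2 + μ x * ‖σ x - σT x‖ ^ 2
        - 2 * ⟪σ x - σT x, cu x - cuT x⟫ := by
    filter_upwards [hconst, hμbd] with x hx hb
    have hμpos : 0 < μ x := lt_of_lt_of_le hm₁ hb.1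
    have hμne : μ x ≠ 0 := hμpos.ne'
    have hcu' : μ x • σ x = cu x := by rw [hx, smul_smul, mul_inv_cancel₀ hμne, one_smul]
    have key : μ x • σT x - cuT x = (cu x - cuT x) - μ x • (σ x - σT x) := by
      rw [smul_sub, hcu']; abel
    rw [key, @norm_sub_sq_real (EuclideanSpace ℝ (Fin 3))]
    rw [real_inner_smul_right, norm_smul, mul_pow]
    have : ⟪cu x - cuT x, σ x - σT x⟫ = ⟪σ x - σT x, cu x - cuT x⟫ := real_inner_comm _ _
    rw [this]
    rw [Real.norm_eq_abs, sq_abs]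
    field_simp
    ring
  have hB : ∀ᵐ x ∂ν, (β x)⁻¹ * ‖cσT x + β x • uT x - f x‖ ^ 2
      = (β x)⁻¹ * ‖cσ x - cσT x‖ ^ 2 + β x * ‖u x - uT x‖ ^ 2
        + 2 * ⟪cσ x - cσT x, u x - uT x⟫ := by
    filter_upwards [hmageq, hβbd] with x hx hb
    have hβpos : 0 < β x := lt_of_lt_of_le hb₁ hb.1
    have hβne : β x ≠ 0 := hβpos.ne'
    have key : cσT x + β x • uT x - f x
        = -((cσ x - cσT x) + β x • (u x - uT x)) := by
      rw [← hx, smul_sub]; abel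
    rw [key, norm_neg, @norm_add_sq_real (EuclideanSpace ℝ (Fin 3))]
    rw [real_inner_smul_right, norm_smul, mul_pow]
    rw [Real.norm_eq_abs, abs_of_pos hβpos]
    field_simp
    ring
  -- rewrite the two LHS integrals using the pointwise identities
  have eA : (∫ x in K, (μ x)⁻¹ * ‖μ x • σT x - cuT x‖ ^ 2 ∂ν)
      = (∫ x in K, (μ x)⁻¹ * ‖cu x - cuT x‖ ^ 2 ∂ν)
        + (∫ x in K, μ x * ‖σ x - σT x‖ ^ 2 ∂ν)
        - 2 * (∫ x in K, ⟪σ x - σT x, cu x - cuT x⟫ ∂ν) := by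
    rw [integral_congr_ae (ae_restrict_of_ae hA)]
    have h := integral_sub (i1.add i4) (i5.const_mul 2)
    simp only [Pi.add_apply] at h
    rw [h, integral_add i1 i4, integral_const_mul]
  have eB : (∫ x in K, (β x)⁻¹ * ‖cσT x + β x • uT x - f x‖ ^ 2 ∂ν)
      = (∫ x in K, (β x)⁻¹ * ‖cσ x - cσT x‖ ^ 2 ∂ν)
        + (∫ x in K, β x * ‖u x - uT x‖ ^ 2 ∂ν)
        + 2 * (∫ x in K, ⟪cσ x - cσT x, u x - uT x⟫ ∂ν) := by
    rw [integral_congr_ae (ae_restrict_of_ae hB)]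
    have h := integral_add (i3.add i2) (i6.const_mul 2)
    simp only [Pi.add_apply] at h
    rw [h, integral_add i3 i2, integral_const_mul]
  rw [eA, eB, integral_add i1 i2, integral_add i3 i4]
  ring
end

section
/- Dual energy-error identity (equation (4.8), second identity): Let (σ, cσ) and (τ, cτ) be curl pairs and f square-ν-integrable, and suppose the weak dual (magnetizing-field) equation holds against the difference: ∫ β⁻¹ cσ·(cτ − cσ) dν + ∫ μ σ·(τ − σ) dν = ∫ β⁻¹ f·(cτ − cσ) dν. Then 2 ( J*(σ) − J*(τ) ) = ∫ ( β⁻¹|cσ − cτ|² + μ|σ − τ|² ) dν = |||σ − τ|||²_{β,μ}, where J*(ρ) := −½ ∫ μ|ρ|² dν − ½ ∫ β⁻¹|f − cρ|² dν. -/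
open MeasureTheory RealInnerProductSpace

private lemma integrable_inner_of_memLp {Ω : Type*} [MeasurableSpace Ω] {ν : Measure Ω}
    {g h : Ω → EuclideanSpace ℝ (Fin 3)} (hg : MemLp g 2 ν) (hh : MemLp h 2 ν) :
    Integrable (fun x => ⟪g x, h x⟫) ν := by
  have := L2.integrable_inner (𝕜 := ℝ) (hg.toLp g) (hh.toLp h)
  refine this.congr ?_
  filter_upwards [hg.coeFn_toLp, hh.coeFn_toLp] with x h1 h2
  rw [h1, h2]

private lemma integrable_weighted_inner {Ω : Type*} [MeasurableSpace Ω] {ν : Measure Ω}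
    {w : Ω → ℝ} {C : ℝ} (hw : AEStronglyMeasurable w ν) (hbd : ∀ᵐ x ∂ν, ‖w x‖ ≤ C)
    {g h : Ω → EuclideanSpace ℝ (Fin 3)} (hg : MemLp g 2 ν) (hh : MemLp h 2 ν) :
    Integrable (fun x => w x * ⟪g x, h x⟫) ν :=
  (integrable_inner_of_memLp hg hh).bdd_mul hw hbd

/-- Dual energy-error identity (equation (4.8), second identity):
2 (J*(σ) − J*(τ)) = |||σ − τ|||²_{β,μ} whenever σ satisfies the weak dual
(magnetizing-field) equation tested against τ − σ. -/
theorem dual_energy_error_identity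
    {Ω : Type*} [MeasurableSpace Ω] (ν : MeasureTheory.Measure Ω)
    (μ β : Ω → ℝ) (m₁ m₂ b₁ b₂ : ℝ)
    (hm₁ : 0 < m₁) (hm₁₂ : m₁ ≤ m₂) (hb₁ : 0 < b₁) (hb₁₂ : b₁ ≤ b₂)
    (hμmeas : Measurable μ) (hβmeas : Measurable β)
    (hμbd : ∀ᵐ x ∂ν, m₁ ≤ μ x ∧ μ x ≤ m₂)
    (hβbd : ∀ᵐ x ∂ν, b₁ ≤ β x ∧ β x ≤ b₂)
    (σ cσ τ cτ f : Ω → EuclideanSpace ℝ (Fin 3))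
    (hσ : MemLp σ 2 ν) (hcσ : MemLp cσ 2 ν)
    (hτ : MemLp τ 2 ν) (hcτ : MemLp cτ 2 ν)
    (hf : MemLp f 2 ν)
    (hweak : (∫ x, (β x)⁻¹ * ⟪cσ x, cτ x - cσ x⟫ ∂ν)
           + (∫ x, μ x * ⟪σ x, τ x - σ x⟫ ∂ν)
           = ∫ x, (β x)⁻¹ * ⟪f x, cτ x - cσ x⟫ ∂ν) :
    2 * ((-(1 / 2) * (∫ x, μ x * ‖σ x‖ ^ 2 ∂ν)
            - (1 / 2) * (∫ x, (β x)⁻¹ * ‖f x - cσ x‖ ^ 2 ∂ν))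
         - (-(1 / 2) * (∫ x, μ x * ‖τ x‖ ^ 2 ∂ν)
            - (1 / 2) * (∫ x, (β x)⁻¹ * ‖f x - cτ x‖ ^ 2 ∂ν)))
    = ∫ x, ((β x)⁻¹ * ‖cσ x - cτ x‖ ^ 2 + μ x * ‖σ x - τ x‖ ^ 2) ∂ν := by
  -- boundedness of the weights
  have hμm : AEStronglyMeasurable μ ν := hμmeas.aestronglyMeasurable
  have hβim : AEStronglyMeasurable (fun x => (β x)⁻¹) ν :=
    hβmeas.inv.aestronglyMeasurable
  have hμC : ∀ᵐ x ∂ν, ‖μ x‖ ≤ m₂ := by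
    filter_upwards [hμbd] with x hx
    rw [Real.norm_eq_abs, abs_le]
    exact ⟨le_trans (by linarith) hx.1, hx.2⟩
  have hβC : ∀ᵐ x ∂ν, ‖(β x)⁻¹‖ ≤ b₁⁻¹ := by
    filter_upwards [hβbd] with x hx
    have hβpos : 0 < β x := lt_of_lt_of_le hb₁ hx.1
    rw [Real.norm_eq_abs, abs_of_pos (inv_pos.mpr hβpos)]
    exact inv_anti₀ hb₁ hx.1
  -- integrability helpers
  have Iμ : ∀ {g h : Ω → EuclideanSpace ℝ (Fin 3)}, MemLp g 2 ν → MemLp h 2 ν →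
      Integrable (fun x => μ x * ⟪g x, h x⟫) ν :=
    fun hg hh => integrable_weighted_inner hμm hμC hg hh
  have Iβ : ∀ {g h : Ω → EuclideanSpace ℝ (Fin 3)}, MemLp g 2 ν → MemLp h 2 ν →
      Integrable (fun x => (β x)⁻¹ * ⟪g x, h x⟫) ν :=
    fun hg hh => integrable_weighted_inner hβim hβC hg hh
  have hfcσ : MemLp (fun x => f x - cσ x) 2 ν := hf.sub hcσ
  have hfcτ : MemLp (fun x => f x - cτ x) 2 ν := hf.sub hcτ
  have hcστ : MemLp (fun x => cσ x - cτ x) 2 ν := hcσ.sub hcτ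
  have hστ : MemLp (fun x => σ x - τ x) 2 ν := hσ.sub hτ
  have hτσ : MemLp (fun x => τ x - σ x) 2 ν := hτ.sub hσ
  have hcτσ : MemLp (fun x => cτ x - cσ x) 2 ν := hcτ.sub hcσ
  -- rewrite norm squares as inner products
  have nsq : ∀ v : EuclideanSpace ℝ (Fin 3), ‖v‖ ^ 2 = ⟪v, v⟫ :=
    fun v => (real_inner_self_eq_norm_sq v).symm
  -- all the integrable functions we need
  have I1 : Integrable (fun x => μ x * ‖σ x‖ ^ 2) ν := by
    simp_rw [nsq]; exact Iμ hσ hσ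
  have I2 : Integrable (fun x => μ x * ‖τ x‖ ^ 2) ν := by
    simp_rw [nsq]; exact Iμ hτ hτ
  have I3 : Integrable (fun x => (β x)⁻¹ * ‖f x - cσ x‖ ^ 2) ν := by
    simp_rw [nsq]; exact Iβ hfcσ hfcσ
  have I4 : Integrable (fun x => (β x)⁻¹ * ‖f x - cτ x‖ ^ 2) ν := by
    simp_rw [nsq]; exact Iβ hfcτ hfcτ
  have I5 : Integrable (fun x => (β x)⁻¹ * ⟪cσ x, cτ x - cσ x⟫) ν := Iβ hcσ hcτσ
  have I6 : Integrable (fun x => μ x * ⟪σ x, τ x - σ x⟫) ν := Iμ hσ hτσ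
  have I7 : Integrable (fun x => (β x)⁻¹ * ⟪f x, cτ x - cσ x⟫) ν := Iβ hf hcτσ
  -- pointwise algebraic identity
  have key : ∀ x, (β x)⁻¹ * ‖cσ x - cτ x‖ ^ 2 + μ x * ‖σ x - τ x‖ ^ 2
      = (μ x * ‖τ x‖ ^ 2 - μ x * ‖σ x‖ ^ 2 + (β x)⁻¹ * ‖f x - cτ x‖ ^ 2
          - (β x)⁻¹ * ‖f x - cσ x‖ ^ 2)
        - 2 * ((β x)⁻¹ * ⟪cσ x, cτ x - cσ x⟫ + μ x * ⟪σ x, τ x - σ x⟫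
          - (β x)⁻¹ * ⟪f x, cτ x - cσ x⟫) := by
    intro x
    simp only [nsq, inner_sub_left, inner_sub_right, real_inner_comm (f x),
      real_inner_comm (cτ x) (cσ x), real_inner_comm (τ x) (σ x)]
    ring
  have hint : ∫ x, ((β x)⁻¹ * ‖cσ x - cτ x‖ ^ 2 + μ x * ‖σ x - τ x‖ ^ 2) ∂ν
      = (∫ x, μ x * ‖τ x‖ ^ 2 ∂ν) - (∫ x, μ x * ‖σ x‖ ^ 2 ∂ν)
        + (∫ x, (β x)⁻¹ * ‖f x - cτ x‖ ^ 2 ∂ν)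
        - (∫ x, (β x)⁻¹ * ‖f x - cσ x‖ ^ 2 ∂ν)
        - 2 * ((∫ x, (β x)⁻¹ * ⟪cσ x, cτ x - cσ x⟫ ∂ν)
          + (∫ x, μ x * ⟪σ x, τ x - σ x⟫ ∂ν)
          - (∫ x, (β x)⁻¹ * ⟪f x, cτ x - cσ x⟫ ∂ν)) := by
    rw [integral_congr_ae (Filter.Eventually.of_forall key)]
    have J1 : Integrable (fun x => μ x * ‖τ x‖ ^ 2 - μ x * ‖σ x‖ ^ 2) ν := I2.sub I1
    have J2 : Integrable (fun x => μ x * ‖τ x‖ ^ 2 - μ x * ‖σ x‖ ^ 2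
        + (β x)⁻¹ * ‖f x - cτ x‖ ^ 2) ν := J1.add I4
    have J3 : Integrable (fun x => μ x * ‖τ x‖ ^ 2 - μ x * ‖σ x‖ ^ 2
        + (β x)⁻¹ * ‖f x - cτ x‖ ^ 2 - (β x)⁻¹ * ‖f x - cσ x‖ ^ 2) ν := J2.sub I3
    have J4 : Integrable (fun x => (β x)⁻¹ * ⟪cσ x, cτ x - cσ x⟫
        + μ x * ⟪σ x, τ x - σ x⟫) ν := I5.add I6
    have J5 : Integrable (fun x => (β x)⁻¹ * ⟪cσ x, cτ x - cσ x⟫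
        + μ x * ⟪σ x, τ x - σ x⟫ - (β x)⁻¹ * ⟪f x, cτ x - cσ x⟫) ν := J4.sub I7
    rw [integral_sub J3 (J5.const_mul 2), integral_sub J2 I3, integral_add J1 I4,
      integral_sub I2 I1, integral_const_mul 2, integral_sub J4 I7, integral_add I5 I6]
  rw [hint]
  have : (∫ x, (β x)⁻¹ * ⟪cσ x, cτ x - cσ x⟫ ∂ν) + (∫ x, μ x * ⟪σ x, τ x - σ x⟫ ∂ν)
      - (∫ x, (β x)⁻¹ * ⟪f x, cτ x - cσ x⟫ ∂ν) = 0 := by rw [hweak]; ring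
  rw [this]
  ring
end

section
/- Minimization property of the Galerkin pair and the bound η ≤ η̃ (Theorem 4.1, last assertion, via problem (4.9)): Let f be square-ν-integrable and let P and Q be ℝ-linear subspaces of the space of curl pairs (i.e. closed under addition and scalar multiplication of pairs), such that ∫ τ·cv dν = ∫ cτ·v dν for all (v, cv) ∈ P and (τ, cτ) ∈ Q. Suppose (u_T, cu_T) ∈ P satisfies the primal Galerkin equations: ∫ μ⁻¹ cu_T·cv dν + ∫ β u_T·v dν = ∫ f·v dν for all (v, cv) ∈ P, and (σ_T, cσ_T) ∈ Q satisfies the dual Galerkin equations: ∫ β⁻¹ cσ_T·cτ dν + ∫ μ σ_T·τ dν = ∫ β⁻¹ f·cτ dν for all (τ, cτ) ∈ Q. Then for all (v, cv) ∈ P and (τ, cτ) ∈ Q, ∫ μ⁻¹|μ σ_T − cu_T|² dν + ∫ β⁻¹|cσ_T + β u_T − f|² dν ≤ ∫ μ⁻¹|μ τ − cv|² dν + ∫ β⁻¹|cτ + β v − f|² dν; in particular the estimator built from (u_T, σ_T) is bounded by the estimator built from u_T and any other recovered field τ ∈ Q. -/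
open MeasureTheory RealInnerProductSpace

section helpers
variable {Ω : Type*} [MeasurableSpace Ω] {ν : Measure Ω}
variable {E : Type*} [NormedAddCommGroup E] [InnerProductSpace ℝ E]

lemma helper_inner_integrable {h₁ h₂ : Ω → E} (H1 : MemLp h₁ 2 ν) (H2 : MemLp h₂ 2 ν) :
    Integrable (fun x => ⟪h₁ x, h₂ x⟫) ν := by
  have h := MeasureTheory.L2.integrable_inner (𝕜 := ℝ) (H1.toLp h₁) (H2.toLp h₂)
  refine h.congr ?_
  filter_upwards [H1.coeFn_toLp, H2.coeFn_toLp] with x hx hy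
  rw [hx, hy]

lemma helper_mul_inner_integrable {g : Ω → ℝ} {C : ℝ} (hg : AEStronglyMeasurable g ν)
    (hb : ∀ᵐ x ∂ν, ‖g x‖ ≤ C) {h₁ h₂ : Ω → E} (H1 : MemLp h₁ 2 ν) (H2 : MemLp h₂ 2 ν) :
    Integrable (fun x => g x * ⟪h₁ x, h₂ x⟫) ν :=
  (helper_inner_integrable H1 H2).bdd_mul hg hb

lemma helper_mul_normsq_integrable {g : Ω → ℝ} {C : ℝ} (hg : AEStronglyMeasurable g ν)
    (hb : ∀ᵐ x ∂ν, ‖g x‖ ≤ C) {h : Ω → E} (H : MemLp h 2 ν) :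
    Integrable (fun x => g x * ‖h x‖ ^ 2) ν := by
  have h2 := helper_mul_inner_integrable hg hb H H
  simp_rw [real_inner_self_eq_norm_sq] at h2
  exact h2

lemma helper_smul_memℒp {g : Ω → ℝ} {C : ℝ} (hg : AEStronglyMeasurable g ν)
    (hb : ∀ᵐ x ∂ν, ‖g x‖ ≤ C) {h : Ω → E} (H : MemLp h 2 ν) :
    MemLp (fun x => g x • h x) 2 ν := by
  refine MemLp.of_le (H.const_smul C) (hg.smul H.aestronglyMeasurable) ?_
  filter_upwards [hb] with x hx
  rw [norm_smul, Pi.smul_apply, norm_smul]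
  exact mul_le_mul_of_nonneg_right (hx.trans (le_abs_self C)) (norm_nonneg _)

lemma helper_split {c : Ω → ℝ} {C : ℝ} (hc : AEStronglyMeasurable c ν)
    (hb : ∀ᵐ x ∂ν, ‖c x‖ ≤ C) {G H : Ω → E} (hG : MemLp G 2 ν) (hH : MemLp H 2 ν) :
    ∫ x, c x * ‖G x + H x‖ ^ 2 ∂ν
      = (∫ x, c x * ‖G x‖ ^ 2 ∂ν) + 2 * (∫ x, c x * ⟪G x, H x⟫ ∂ν)
        + ∫ x, c x * ‖H x‖ ^ 2 ∂ν := by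
  have h1 := helper_mul_normsq_integrable hc hb hG
  have h2 := (helper_mul_inner_integrable hc hb hG hH).const_mul 2
  have h3 := helper_mul_normsq_integrable hc hb hH
  have he : (fun x => c x * ‖G x + H x‖ ^ 2)
      = fun x => (c x * ‖G x‖ ^ 2 + 2 * (c x * ⟪G x, H x⟫)) + c x * ‖H x‖ ^ 2 := by
    funext x; rw [norm_add_sq_real]; ring
  have h12 : Integrable (fun x => c x * ‖G x‖ ^ 2 + 2 * (c x * ⟪G x, H x⟫)) ν := h1.add h2
  have e1 : ∫ x, (c x * ‖G x‖ ^ 2 + 2 * (c x * ⟪G x, H x⟫)) + c x * ‖H x‖ ^ 2 ∂ν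
      = (∫ x, c x * ‖G x‖ ^ 2 + 2 * (c x * ⟪G x, H x⟫) ∂ν) + ∫ x, c x * ‖H x‖ ^ 2 ∂ν :=
    integral_add h12 h3
  have e2 : ∫ x, c x * ‖G x‖ ^ 2 + 2 * (c x * ⟪G x, H x⟫) ∂ν
      = (∫ x, c x * ‖G x‖ ^ 2 ∂ν) + ∫ x, 2 * (c x * ⟪G x, H x⟫) ∂ν :=
    integral_add h1 h2
  rw [he, e1, e2, integral_const_mul]

end helpers
/-- Minimization property of the Galerkin pair and the bound η ≤ η̃
(Theorem 4.1, last assertion, via problem (4.9)): the Galerkin solutions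
(u_T, σ_T) minimize the estimator functional over P × Q. -/
theorem galerkin_pair_minimizes_estimator
    {Ω : Type*} [MeasurableSpace Ω] (ν : MeasureTheory.Measure Ω)
    (μ β : Ω → ℝ) (m₁ m₂ b₁ b₂ : ℝ)
    (hm₁ : 0 < m₁) (hm₁₂ : m₁ ≤ m₂) (hb₁ : 0 < b₁) (hb₁₂ : b₁ ≤ b₂)
    (hμmeas : Measurable μ) (hβmeas : Measurable β)
    (hμbd : ∀ᵐ x ∂ν, m₁ ≤ μ x ∧ μ x ≤ m₂)
    (hβbd : ∀ᵐ x ∂ν, b₁ ≤ β x ∧ β x ≤ b₂)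
    (f : Ω → EuclideanSpace ℝ (Fin 3)) (hf : MemLp f 2 ν)
    (P Q : Submodule ℝ ((Ω → EuclideanSpace ℝ (Fin 3)) × (Ω → EuclideanSpace ℝ (Fin 3))))
    (hPL2 : ∀ p ∈ P, MemLp p.1 2 ν ∧ MemLp p.2 2 ν)
    (hQL2 : ∀ q ∈ Q, MemLp q.1 2 ν ∧ MemLp q.2 2 ν)
    (hibp : ∀ p ∈ P, ∀ q ∈ Q,
      ∫ x, ⟪q.1 x, p.2 x⟫ ∂ν = ∫ x, ⟪q.2 x, p.1 x⟫ ∂ν)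
    (uT cuT σT cσT : Ω → EuclideanSpace ℝ (Fin 3))
    (huTP : (uT, cuT) ∈ P) (hσTQ : (σT, cσT) ∈ Q)
    (hprimal : ∀ p ∈ P,
      (∫ x, (μ x)⁻¹ * ⟪cuT x, p.2 x⟫ ∂ν) + (∫ x, β x * ⟪uT x, p.1 x⟫ ∂ν)
        = ∫ x, ⟪f x, p.1 x⟫ ∂ν)
    (hdual : ∀ q ∈ Q,
      (∫ x, (β x)⁻¹ * ⟪cσT x, q.2 x⟫ ∂ν) + (∫ x, μ x * ⟪σT x, q.1 x⟫ ∂ν)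
        = ∫ x, (β x)⁻¹ * ⟪f x, q.2 x⟫ ∂ν) :
    ∀ p ∈ P, ∀ q ∈ Q,
      (∫ x, (μ x)⁻¹ * ‖μ x • σT x - cuT x‖ ^ 2 ∂ν)
        + (∫ x, (β x)⁻¹ * ‖cσT x + β x • uT x - f x‖ ^ 2 ∂ν)
      ≤ (∫ x, (μ x)⁻¹ * ‖μ x • q.1 x - p.2 x‖ ^ 2 ∂ν)
        + (∫ x, (β x)⁻¹ * ‖q.2 x + β x • p.1 x - f x‖ ^ 2 ∂ν) := by
  intro p hp q hq
  -- difference fields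
  set dv : Ω → EuclideanSpace ℝ (Fin 3) := p.1 - uT with hdv
  set dcv : Ω → EuclideanSpace ℝ (Fin 3) := p.2 - cuT with hdcv
  set dτ : Ω → EuclideanSpace ℝ (Fin 3) := q.1 - σT with hdτ
  set dcτ : Ω → EuclideanSpace ℝ (Fin 3) := q.2 - cσT with hdcτ
  have hdp : (dv, dcv) ∈ P := by rw [hdv, hdcv]; exact P.sub_mem hp huTP
  have hdq : (dτ, dcτ) ∈ Q := by rw [hdτ, hdcτ]; exact Q.sub_mem hq hσTQ
  -- measurability and bounds
  have hμsm : AEStronglyMeasurable μ ν := hμmeas.aestronglyMeasurable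
  have hβsm : AEStronglyMeasurable β ν := hβmeas.aestronglyMeasurable
  have hμism : AEStronglyMeasurable (fun x => (μ x)⁻¹) ν := hμmeas.inv.aestronglyMeasurable
  have hβism : AEStronglyMeasurable (fun x => (β x)⁻¹) ν := hβmeas.inv.aestronglyMeasurable
  have hμn : ∀ᵐ x ∂ν, ‖μ x‖ ≤ m₂ := by
    filter_upwards [hμbd] with x hx
    rw [Real.norm_eq_abs, abs_of_pos (lt_of_lt_of_le hm₁ hx.1)]; exact hx.2
  have hβn : ∀ᵐ x ∂ν, ‖β x‖ ≤ b₂ := by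
    filter_upwards [hβbd] with x hx
    rw [Real.norm_eq_abs, abs_of_pos (lt_of_lt_of_le hb₁ hx.1)]; exact hx.2
  have hμin : ∀ᵐ x ∂ν, ‖(μ x)⁻¹‖ ≤ m₁⁻¹ := by
    filter_upwards [hμbd] with x hx
    rw [Real.norm_eq_abs, abs_of_pos (inv_pos.mpr (lt_of_lt_of_le hm₁ hx.1))]
    exact inv_anti₀ hm₁ hx.1
  have hβin : ∀ᵐ x ∂ν, ‖(β x)⁻¹‖ ≤ b₁⁻¹ := by
    filter_upwards [hβbd] with x hx
    rw [Real.norm_eq_abs, abs_of_pos (inv_pos.mpr (lt_of_lt_of_le hb₁ hx.1))]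
    exact inv_anti₀ hb₁ hx.1
  -- L² facts
  have huL : MemLp uT 2 ν := (hPL2 _ huTP).1
  have hcuL : MemLp cuT 2 ν := (hPL2 _ huTP).2
  have hσL : MemLp σT 2 ν := (hQL2 _ hσTQ).1
  have hcσL : MemLp cσT 2 ν := (hQL2 _ hσTQ).2
  have hdvL : MemLp dv 2 ν := by rw [hdv]; exact (hPL2 p hp).1.sub huL
  have hdcvL : MemLp dcv 2 ν := by rw [hdcv]; exact (hPL2 p hp).2.sub hcuL
  have hdτL : MemLp dτ 2 ν := by rw [hdτ]; exact (hQL2 q hq).1.sub hσL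
  have hdcτL : MemLp dcτ 2 ν := by rw [hdcτ]; exact (hQL2 q hq).2.sub hcσL
  have hGμ : MemLp (fun x => μ x • σT x - cuT x) 2 ν :=
    (helper_smul_memℒp hμsm hμn hσL).sub hcuL
  have hHμ : MemLp (fun x => μ x • dτ x - dcv x) 2 ν :=
    (helper_smul_memℒp hμsm hμn hdτL).sub hdcvL
  have hGβ : MemLp (fun x => cσT x + β x • uT x - f x) 2 ν :=
    (hcσL.add (helper_smul_memℒp hβsm hβn huL)).sub hf
  have hHβ : MemLp (fun x => dcτ x + β x • dv x) 2 ν :=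
    hdcτL.add (helper_smul_memℒp hβsm hβn hdvL)
  -- rewrite the right-hand side using the splittings
  have hgoalμ : (fun x => (μ x)⁻¹ * ‖μ x • q.1 x - p.2 x‖ ^ 2)
      = fun x => (μ x)⁻¹ * ‖(μ x • σT x - cuT x) + (μ x • dτ x - dcv x)‖ ^ 2 := by
    funext x
    have : μ x • q.1 x - p.2 x = (μ x • σT x - cuT x) + (μ x • dτ x - dcv x) := by
      rw [hdτ, hdcv]; simp only [Pi.sub_apply]; rw [smul_sub]; abel
    rw [this]
  have hgoalβ : (fun x => (β x)⁻¹ * ‖q.2 x + β x • p.1 x - f x‖ ^ 2)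
      = fun x => (β x)⁻¹ * ‖(cσT x + β x • uT x - f x) + (dcτ x + β x • dv x)‖ ^ 2 := by
    funext x
    have : q.2 x + β x • p.1 x - f x = (cσT x + β x • uT x - f x) + (dcτ x + β x • dv x) := by
      rw [hdcτ, hdv]; simp only [Pi.sub_apply]; rw [smul_sub]; abel
    rw [this]
  rw [show (∫ x, (μ x)⁻¹ * ‖μ x • q.1 x - p.2 x‖ ^ 2 ∂ν)
      = ∫ x, (μ x)⁻¹ * ‖(μ x • σT x - cuT x) + (μ x • dτ x - dcv x)‖ ^ 2 ∂ν from by rw [hgoalμ]]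
  rw [show (∫ x, (β x)⁻¹ * ‖q.2 x + β x • p.1 x - f x‖ ^ 2 ∂ν)
      = ∫ x, (β x)⁻¹ * ‖(cσT x + β x • uT x - f x) + (dcτ x + β x • dv x)‖ ^ 2 ∂ν from by rw [hgoalβ]]
  rw [helper_split hμism hμin hGμ hHμ, helper_split hβism hβin hGβ hHβ]
  -- nonnegativity of quadratic remainders
  have hposμ : 0 ≤ ∫ x, (μ x)⁻¹ * ‖μ x • dτ x - dcv x‖ ^ 2 ∂ν := by
    refine integral_nonneg_of_ae ?_
    filter_upwards [hμbd] with x hx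
    exact mul_nonneg (inv_nonneg.mpr (le_of_lt (lt_of_lt_of_le hm₁ hx.1))) (sq_nonneg _)
  have hposβ : 0 ≤ ∫ x, (β x)⁻¹ * ‖dcτ x + β x • dv x‖ ^ 2 ∂ν := by
    refine integral_nonneg_of_ae ?_
    filter_upwards [hβbd] with x hx
    exact mul_nonneg (inv_nonneg.mpr (le_of_lt (lt_of_lt_of_le hb₁ hx.1))) (sq_nonneg _)
  -- the cross terms sum to zero
  -- integrability of all elementary pieces
  have hI1 : Integrable (fun x => μ x * ⟪σT x, dτ x⟫) ν :=
    helper_mul_inner_integrable hμsm hμn hσL hdτL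
  have hI2 : Integrable (fun x => ⟪σT x, dcv x⟫) ν := helper_inner_integrable hσL hdcvL
  have hI3 : Integrable (fun x => ⟪cuT x, dτ x⟫) ν := helper_inner_integrable hcuL hdτL
  have hI4 : Integrable (fun x => (μ x)⁻¹ * ⟪cuT x, dcv x⟫) ν :=
    helper_mul_inner_integrable hμism hμin hcuL hdcvL
  have hJ1 : Integrable (fun x => (β x)⁻¹ * ⟪cσT x, dcτ x⟫) ν :=
    helper_mul_inner_integrable hβism hβin hcσL hdcτL
  have hJ2 : Integrable (fun x => ⟪cσT x, dv x⟫) ν := helper_inner_integrable hcσL hdvL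
  have hJ3 : Integrable (fun x => ⟪uT x, dcτ x⟫) ν := helper_inner_integrable huL hdcτL
  have hJ4 : Integrable (fun x => β x * ⟪uT x, dv x⟫) ν :=
    helper_mul_inner_integrable hβsm hβn huL hdvL
  have hJ5 : Integrable (fun x => (β x)⁻¹ * ⟪f x, dcτ x⟫) ν :=
    helper_mul_inner_integrable hβism hβin hf hdcτL
  have hJ6 : Integrable (fun x => ⟪f x, dv x⟫) ν := helper_inner_integrable hf hdvL
  -- expansion of the μ cross term
  have hexpμ : ∫ x, (μ x)⁻¹ * ⟪μ x • σT x - cuT x, μ x • dτ x - dcv x⟫ ∂ν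
      = (∫ x, μ x * ⟪σT x, dτ x⟫ ∂ν) - (∫ x, ⟪σT x, dcv x⟫ ∂ν)
        - (∫ x, ⟪cuT x, dτ x⟫ ∂ν) + ∫ x, (μ x)⁻¹ * ⟪cuT x, dcv x⟫ ∂ν := by
    have hae : (fun x => (μ x)⁻¹ * ⟪μ x • σT x - cuT x, μ x • dτ x - dcv x⟫)
        =ᵐ[ν] fun x => μ x * ⟪σT x, dτ x⟫ - ⟪σT x, dcv x⟫
          - ⟪cuT x, dτ x⟫ + (μ x)⁻¹ * ⟪cuT x, dcv x⟫ := by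
      filter_upwards [hμbd] with x hx
      have h0 : μ x ≠ 0 := (lt_of_lt_of_le hm₁ hx.1).ne'
      simp only [inner_sub_left, inner_sub_right, real_inner_smul_left, real_inner_smul_right]
      field_simp
      ring
    rw [integral_congr_ae hae]
    have e1 : ∫ x, (μ x * ⟪σT x, dτ x⟫ - ⟪σT x, dcv x⟫ - ⟪cuT x, dτ x⟫)
        + (μ x)⁻¹ * ⟪cuT x, dcv x⟫ ∂ν
        = (∫ x, μ x * ⟪σT x, dτ x⟫ - ⟪σT x, dcv x⟫ - ⟪cuT x, dτ x⟫ ∂ν)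
          + ∫ x, (μ x)⁻¹ * ⟪cuT x, dcv x⟫ ∂ν :=
      integral_add ((hI1.sub hI2).sub hI3) hI4
    have e2 : ∫ x, (μ x * ⟪σT x, dτ x⟫ - ⟪σT x, dcv x⟫) - ⟪cuT x, dτ x⟫ ∂ν
        = (∫ x, μ x * ⟪σT x, dτ x⟫ - ⟪σT x, dcv x⟫ ∂ν) - ∫ x, ⟪cuT x, dτ x⟫ ∂ν :=
      integral_sub (hI1.sub hI2) hI3
    have e3 : ∫ x, μ x * ⟪σT x, dτ x⟫ - ⟪σT x, dcv x⟫ ∂ν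
        = (∫ x, μ x * ⟪σT x, dτ x⟫ ∂ν) - ∫ x, ⟪σT x, dcv x⟫ ∂ν :=
      integral_sub hI1 hI2
    rw [e1, e2, e3]
  -- expansion of the β cross term
  have hexpβ : ∫ x, (β x)⁻¹ * ⟪cσT x + β x • uT x - f x, dcτ x + β x • dv x⟫ ∂ν
      = (∫ x, (β x)⁻¹ * ⟪cσT x, dcτ x⟫ ∂ν) + (∫ x, ⟪cσT x, dv x⟫ ∂ν)
        + (∫ x, ⟪uT x, dcτ x⟫ ∂ν) + (∫ x, β x * ⟪uT x, dv x⟫ ∂ν)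
        - (∫ x, (β x)⁻¹ * ⟪f x, dcτ x⟫ ∂ν) - ∫ x, ⟪f x, dv x⟫ ∂ν := by
    have hae : (fun x => (β x)⁻¹ * ⟪cσT x + β x • uT x - f x, dcτ x + β x • dv x⟫)
        =ᵐ[ν] fun x => (β x)⁻¹ * ⟪cσT x, dcτ x⟫ + ⟪cσT x, dv x⟫ + ⟪uT x, dcτ x⟫
          + β x * ⟪uT x, dv x⟫ - (β x)⁻¹ * ⟪f x, dcτ x⟫ - ⟪f x, dv x⟫ := by
      filter_upwards [hβbd] with x hx
      have h0 : β x ≠ 0 := (lt_of_lt_of_le hb₁ hx.1).ne'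
      simp only [inner_sub_left, inner_add_left, inner_add_right,
        real_inner_smul_left, real_inner_smul_right]
      field_simp
      ring
    rw [integral_congr_ae hae]
    have e1 : ∫ x, ((β x)⁻¹ * ⟪cσT x, dcτ x⟫ + ⟪cσT x, dv x⟫ + ⟪uT x, dcτ x⟫
          + β x * ⟪uT x, dv x⟫ - (β x)⁻¹ * ⟪f x, dcτ x⟫) - ⟪f x, dv x⟫ ∂ν
        = (∫ x, (β x)⁻¹ * ⟪cσT x, dcτ x⟫ + ⟪cσT x, dv x⟫ + ⟪uT x, dcτ x⟫
          + β x * ⟪uT x, dv x⟫ - (β x)⁻¹ * ⟪f x, dcτ x⟫ ∂ν) - ∫ x, ⟪f x, dv x⟫ ∂ν :=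
      integral_sub ((((hJ1.add hJ2).add hJ3).add hJ4).sub hJ5) hJ6
    have e2 : ∫ x, ((β x)⁻¹ * ⟪cσT x, dcτ x⟫ + ⟪cσT x, dv x⟫ + ⟪uT x, dcτ x⟫
          + β x * ⟪uT x, dv x⟫) - (β x)⁻¹ * ⟪f x, dcτ x⟫ ∂ν
        = (∫ x, (β x)⁻¹ * ⟪cσT x, dcτ x⟫ + ⟪cσT x, dv x⟫ + ⟪uT x, dcτ x⟫
          + β x * ⟪uT x, dv x⟫ ∂ν) - ∫ x, (β x)⁻¹ * ⟪f x, dcτ x⟫ ∂ν :=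
      integral_sub (((hJ1.add hJ2).add hJ3).add hJ4) hJ5
    have e3 : ∫ x, ((β x)⁻¹ * ⟪cσT x, dcτ x⟫ + ⟪cσT x, dv x⟫ + ⟪uT x, dcτ x⟫)
          + β x * ⟪uT x, dv x⟫ ∂ν
        = (∫ x, (β x)⁻¹ * ⟪cσT x, dcτ x⟫ + ⟪cσT x, dv x⟫ + ⟪uT x, dcτ x⟫ ∂ν)
          + ∫ x, β x * ⟪uT x, dv x⟫ ∂ν :=
      integral_add ((hJ1.add hJ2).add hJ3) hJ4
    have e4 : ∫ x, ((β x)⁻¹ * ⟪cσT x, dcτ x⟫ + ⟪cσT x, dv x⟫) + ⟪uT x, dcτ x⟫ ∂ν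
        = (∫ x, (β x)⁻¹ * ⟪cσT x, dcτ x⟫ + ⟪cσT x, dv x⟫ ∂ν) + ∫ x, ⟪uT x, dcτ x⟫ ∂ν :=
      integral_add (hJ1.add hJ2) hJ3
    have e5 : ∫ x, (β x)⁻¹ * ⟪cσT x, dcτ x⟫ + ⟪cσT x, dv x⟫ ∂ν
        = (∫ x, (β x)⁻¹ * ⟪cσT x, dcτ x⟫ ∂ν) + ∫ x, ⟪cσT x, dv x⟫ ∂ν :=
      integral_add hJ1 hJ2
    rw [e1, e2, e3, e4, e5]
  -- Galerkin equations applied to the differences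
  have hpr := hprimal (dv, dcv) hdp
  have hdu := hdual (dτ, dcτ) hdq
  have hib1 := hibp (dv, dcv) hdp (σT, cσT) hσTQ
  have hib2 := hibp (uT, cuT) huTP (dτ, dcτ) hdq
  dsimp only at hpr hdu hib1 hib2
  have hib2' : ∫ x, ⟪cuT x, dτ x⟫ ∂ν = ∫ x, ⟪uT x, dcτ x⟫ ∂ν := by
    have c1 : ∫ x, ⟪cuT x, dτ x⟫ ∂ν = ∫ x, ⟪dτ x, cuT x⟫ ∂ν :=
      integral_congr_ae (Filter.Eventually.of_forall fun x => real_inner_comm _ _)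
    have c2 : ∫ x, ⟪dcτ x, uT x⟫ ∂ν = ∫ x, ⟪uT x, dcτ x⟫ ∂ν :=
      integral_congr_ae (Filter.Eventually.of_forall fun x => real_inner_comm _ _)
    rw [c1, hib2, c2]
  linarith [hexpμ, hexpβ, hpr, hdu, hib1, hib2', hposμ, hposβ]
end

section
/- Concrete global reliability identity on ℝ³ (Theorem 4.1 realized with the actual curl operator): Let μ, β : ℝ³ → ℝ be continuously differentiable with μ(x) ≥ m₁ > 0 and β(x) ≥ b₁ > 0 for all x. Let u : ℝ³ → ℝ³ be twice continuously differentiable with compact support, and let u_T, σ_T : ℝ³ → ℝ³ be continuously differentiable with compact support. Define the magnetizing field σ := μ⁻¹ (∇×u) and the source f := ∇×σ + β u. Then ∫_{ℝ³} μ⁻¹|μ σ_T − ∇×u_T|² dx + ∫_{ℝ³} β⁻¹|∇×σ_T + β u_T − f|² dx = ∫_{ℝ³} ( μ⁻¹|∇×(u − u_T)|² + β|u − u_T|² ) dx + ∫_{ℝ³} ( β⁻¹|∇×(σ − σ_T)|² + μ|σ − σ_T|² ) dx, all integrals being with respect to Lebesgue measure on ℝ³. -/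
open MeasureTheory

/-- The i-th partial derivative of a vector field on ℝ³ (Fréchet derivative
applied to the i-th standard basis vector). -/
noncomputable def partialDeriv3 (i : Fin 3) (V : (Fin 3 → ℝ) → (Fin 3 → ℝ))
    (x : Fin 3 → ℝ) : Fin 3 → ℝ :=
  fderiv ℝ V x (Pi.single i 1)

/-- The curl of a vector field on ℝ³:
∇×V = (∂₂V₃ − ∂₃V₂, ∂₃V₁ − ∂₁V₃, ∂₁V₂ − ∂₂V₁). -/
noncomputable def curl3 (V : (Fin 3 → ℝ) → (Fin 3 → ℝ)) (x : Fin 3 → ℝ) :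
    Fin 3 → ℝ :=
  ![partialDeriv3 1 V x 2 - partialDeriv3 2 V x 1,
    partialDeriv3 2 V x 0 - partialDeriv3 0 V x 2,
    partialDeriv3 0 V x 1 - partialDeriv3 1 V x 0]


open Set

abbrev R3 := Fin 3 → ℝ

lemma integral_pd_eq_zero (i : Fin 3) (g : R3 → ℝ) (hg : ContDiff ℝ 1 g)
    (hgs : HasCompactSupport g) : ∫ x : R3, fderiv ℝ g x (Pi.single i 1) = 0 := by
  obtain ⟨R, hR0, hR⟩ := hgs.isCompact.isBounded.subset_closedBall_lt 0 0
  set a : R3 := fun _ => -(R + 1)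
  set b : R3 := fun _ => (R + 1)
  have hab : a ≤ b := fun j => by simp only [a, b]; linarith
  have hgz : ∀ x : R3, R < ‖x‖ → g x = 0 := by
    intro x hx
    refine image_eq_zero_of_notMem_tsupport fun hmem => ?_
    have := hR hmem
    rw [Metric.mem_closedBall, dist_zero_right] at this
    linarith
  have hzero : ∀ x : R3, x ∉ Icc a b → fderiv ℝ g x = 0 := by
    intro x hx
    apply fderiv_of_notMem_tsupport
    intro hmem
    apply hx
    have := hR hmem
    rw [Metric.mem_closedBall, dist_zero_right] at this
    refine ⟨fun j => ?_, fun j => ?_⟩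
    · simp only [a]
      have := (abs_le.mp ((norm_le_pi_norm x j).trans this)).1
      simp at this ⊢; linarith
    · simp only [b]
      have := (abs_le.mp ((norm_le_pi_norm x j).trans this)).2
      simp at this ⊢; linarith
  have hint : Integrable (fun x : R3 => fderiv ℝ g x (Pi.single i 1)) := by
    refine Continuous.integrable_of_hasCompactSupport ?_ (hgs.fderiv_apply ℝ _)
    exact (hg.continuous_fderiv one_ne_zero).clm_apply continuous_const
  have key := integral_divergence_of_hasFDerivAt_off_countable' a b hab
    (fun j x => if j = i then g x else 0)
    (fun j x => if j = i then fderiv ℝ g x else 0) ∅ Set.countable_empty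
    (fun j => by
      by_cases h : j = i <;> simp [h, (hg.continuous).continuousOn, continuousOn_const])
    (fun x _ j => by
      by_cases h : j = i
      · simpa [h] using (hg.differentiable one_ne_zero x).hasFDerivAt
      · simpa [h] using hasFDerivAt_const (0:ℝ) x)
    (by
      have : (fun x : R3 => ∑ j, (if j = i then fderiv ℝ g x else 0) (Pi.single j 1))
          = fun x : R3 => fderiv ℝ g x (Pi.single i 1) := by
        funext x
        rw [Finset.sum_eq_single i] <;> simp +contextual
      rw [this]
      exact hint.integrableOn)
  have hsum : (∑ j : Fin 3,
      ((∫ x in Icc (a ∘ j.succAbove) (b ∘ j.succAbove),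
          (if j = i then g (j.insertNth (b j) x) else 0)) -
        ∫ x in Icc (a ∘ j.succAbove) (b ∘ j.succAbove),
          (if j = i then g (j.insertNth (a j) x) else 0))) = 0 := by
    refine Finset.sum_eq_zero fun j _ => ?_
    by_cases h : j = i
    · subst h
      have h1 : ∀ y : Fin 2 → ℝ, g ((Fin.insertNth (α := fun _ : Fin 3 => ℝ) j (b j) y)) = 0 := by
        intro y
        refine hgz ((Fin.insertNth (α := fun _ : Fin 3 => ℝ) j (b j) y)) ?_
        have hle := norm_le_pi_norm ((Fin.insertNth (α := fun _ : Fin 3 => ℝ) j (b j) y)) j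
        rw [Fin.insertNth_apply_same] at hle
        simp only [b, Real.norm_eq_abs, abs_of_pos (show (0:ℝ) < R + 1 by linarith)] at hle
        linarith
      have h2 : ∀ y : Fin 2 → ℝ, g ((Fin.insertNth (α := fun _ : Fin 3 => ℝ) j (a j) y)) = 0 := by
        intro y
        refine hgz ((Fin.insertNth (α := fun _ : Fin 3 => ℝ) j (a j) y)) ?_
        have hle := norm_le_pi_norm ((Fin.insertNth (α := fun _ : Fin 3 => ℝ) j (a j) y)) j
        rw [Fin.insertNth_apply_same] at hle
        simp only [a, Real.norm_eq_abs, abs_neg, abs_of_pos (show (0:ℝ) < R + 1 by linarith)] at hle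
        linarith
      simp [h1, h2]
    · simp [h]
  beta_reduce at key
  have hIccInt : (∫ x in Icc a b, ∑ j, (if j = i then fderiv ℝ g x else 0) (Pi.single j 1))
      = ∫ x : R3, fderiv ℝ g x (Pi.single i 1) := by
    have heq : (fun x : R3 => ∑ j, (if j = i then fderiv ℝ g x else 0) (Pi.single j 1))
        = fun x : R3 => fderiv ℝ g x (Pi.single i 1) := by
      funext x
      rw [Finset.sum_eq_single i] <;> simp +contextual
    rw [heq]
    refine setIntegral_eq_integral_of_forall_compl_eq_zero fun x hx => ?_
    rw [hzero x hx]; rfl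
  rw [hIccInt, hsum] at key
  exact key

section Helpers

variable {V W : R3 → R3}

lemma fderiv_proj (hV : Differentiable ℝ V) (k : Fin 3) (x v : R3) :
    fderiv ℝ (fun y => V y k) x v = fderiv ℝ V x v k := by
  have h := ((ContinuousLinearMap.proj (R := ℝ) (φ := fun _ : Fin 3 => ℝ) k).hasFDerivAt.comp x
    (hV x).hasFDerivAt).fderiv
  have : (fun y => V y k) = (ContinuousLinearMap.proj (R := ℝ) (φ := fun _ : Fin 3 => ℝ) k) ∘ V :=
    rfl
  rw [this, h]
  rfl

lemma contDiff_comp_proj {n : ℕ∞} (hV : ContDiff ℝ n V) (k : Fin 3) :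
    ContDiff ℝ n fun x => V x k :=
  (ContinuousLinearMap.proj (R := ℝ) (φ := fun _ : Fin 3 => ℝ) k).contDiff.comp hV

lemma hcs_comp_proj (hVs : HasCompactSupport V) (k : Fin 3) :
    HasCompactSupport fun x => V x k :=
  hVs.comp_left (g := fun v : R3 => v k) rfl

lemma curl3_contDiff (hV : ContDiff ℝ 2 V) : ContDiff ℝ 1 (curl3 V) := by
  have hpd : ∀ i : Fin 3, ContDiff ℝ 1 fun x => partialDeriv3 i V x := by
    intro i
    exact (hV.fderiv_right (le_refl _)).clm_apply contDiff_const
  have hpdk : ∀ i k : Fin 3, ContDiff ℝ 1 fun x => partialDeriv3 i V x k :=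
    fun i k => contDiff_comp_proj (hpd i) k
  apply contDiff_pi.2
  intro k
  fin_cases k <;> simp only [curl3, Matrix.cons_val_zero, Matrix.cons_val_one, Matrix.head_cons,
    Matrix.cons_val_two, Matrix.tail_cons] <;>
    exact ContDiff.sub (hpdk _ _) (hpdk _ _)

lemma curl3_continuous (hV : ContDiff ℝ 1 V) : Continuous (curl3 V) := by
  have hpd : ∀ i : Fin 3, Continuous fun x => partialDeriv3 i V x :=
    fun i => (hV.continuous_fderiv one_ne_zero).clm_apply continuous_const
  have hpdk : ∀ i k : Fin 3, Continuous fun x => partialDeriv3 i V x k :=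
    fun i k => (continuous_apply k).comp (hpd i)
  apply continuous_pi
  intro k
  fin_cases k <;> simp only [curl3, Matrix.cons_val_zero, Matrix.cons_val_one, Matrix.head_cons,
    Matrix.cons_val_two, Matrix.tail_cons] <;>
    exact Continuous.sub (hpdk _ _) (hpdk _ _)

lemma curl3_hcs (hVs : HasCompactSupport V) : HasCompactSupport (curl3 V) := by
  have h := hVs.fderiv ℝ
  have heq : curl3 V = (fun L : R3 →L[ℝ] R3 =>
      ![L (Pi.single 1 1) 2 - L (Pi.single 2 1) 1,
        L (Pi.single 2 1) 0 - L (Pi.single 0 1) 2,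
        L (Pi.single 0 1) 1 - L (Pi.single 1 1) 0]) ∘ fderiv ℝ V := by
    funext x
    simp [curl3, partialDeriv3, Function.comp]
  rw [heq]
  apply h.comp_left
  funext k
  fin_cases k <;> simp

lemma curl3_sub (hV : Differentiable ℝ V) (hW : Differentiable ℝ W) (x : R3) :
    curl3 (V - W) x = curl3 V x - curl3 W x := by
  have h : ∀ i : Fin 3, partialDeriv3 i (V - W) x = partialDeriv3 i V x - partialDeriv3 i W x := by
    intro i
    unfold partialDeriv3
    rw [show fderiv ℝ (V - W) x = fderiv ℝ V x - fderiv ℝ W x from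
      ((hV x).hasFDerivAt.sub (hW x).hasFDerivAt).fderiv]
    rfl
  funext k
  fin_cases k <;> simp [curl3, h] <;> ring

/-- Integration by parts: product rule version. -/
lemma ibp2 (i : Fin 3) (v w : R3 → ℝ) (hv : ContDiff ℝ 1 v) (hw : ContDiff ℝ 1 w)
    (hvs : HasCompactSupport v) (hws : HasCompactSupport w) :
    ∫ x : R3, (fderiv ℝ v x (Pi.single i 1) * w x + v x * fderiv ℝ w x (Pi.single i 1)) = 0 := by
  have h := integral_pd_eq_zero i (fun x => v x * w x) (hv.mul hw) (hvs.mul_right)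
  rw [← h]
  congr 1
  funext x
  rw [fderiv_fun_mul (hv.differentiable one_ne_zero x) (hw.differentiable one_ne_zero x)]
  simp
  ring

end Helpers

lemma integrable_wsq_s15 (c : R3 → ℝ) (hc : Continuous c) (F : R3 → R3)
    (hF : Continuous F) (hFs : HasCompactSupport F) :
    Integrable (fun x => c x * ∑ i, (F x) i ^ 2) := by
  apply Continuous.integrable_of_hasCompactSupport
  · exact hc.mul (continuous_finset_sum _ fun i _ => ((continuous_apply i).comp hF).pow 2)
  · refine hFs.mono' fun x hx => ?_
    by_contra h
    have hFx : F x = 0 := image_eq_zero_of_notMem_tsupport h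
    exact hx (by simp [hFx])

lemma integrable_dot (F G : R3 → R3) (hF : Continuous F) (hG : Continuous G)
    (hGs : HasCompactSupport G) : Integrable (fun x => ∑ i, F x i * G x i) := by
  apply Continuous.integrable_of_hasCompactSupport
  · exact continuous_finset_sum _ fun i _ =>
      ((continuous_apply i).comp hF).mul ((continuous_apply i).comp hG)
  · refine hGs.mono' fun x hx => ?_
    by_contra h
    have hGx : G x = 0 := image_eq_zero_of_notMem_tsupport h
    exact hx (by simp [hGx])

lemma curl3_adjoint (V W : R3 → R3) (hV : ContDiff ℝ 1 V) (hW : ContDiff ℝ 1 W)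
    (hVs : HasCompactSupport V) (hWs : HasCompactSupport W) :
    ∫ x : R3, ∑ i, curl3 V x i * W x i = ∫ x : R3, ∑ i, V x i * curl3 W x i := by
  set P : Fin 3 → Fin 3 → Fin 3 → R3 → ℝ := fun i j k x =>
    fderiv ℝ (fun y => V y j) x (Pi.single i 1) * W x k
      + V x j * fderiv ℝ (fun y => W y k) x (Pi.single i 1) with hP
  have hint : ∀ i j k : Fin 3, Integrable (P i j k) := by
    intro i j k
    apply Continuous.integrable_of_hasCompactSupport
    · refine Continuous.add (Continuous.mul ?_ ?_) (Continuous.mul ?_ ?_)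
      · exact ((contDiff_comp_proj hV j).continuous_fderiv (by simp)).clm_apply continuous_const
      · exact (continuous_apply k).comp hW.continuous
      · exact (continuous_apply j).comp hV.continuous
      · exact ((contDiff_comp_proj hW k).continuous_fderiv (by simp)).clm_apply continuous_const
    · exact (((hcs_comp_proj hVs j).fderiv_apply ℝ _).mul_right.add
        ((hcs_comp_proj hWs k).fderiv_apply ℝ _).mul_left)
  have hz : ∀ i j k : Fin 3, (∫ x : R3, P i j k x) = 0 := fun i j k =>
    ibp2 i _ _ (contDiff_comp_proj hV j) (contDiff_comp_proj hW k)
      (hcs_comp_proj hVs j) (hcs_comp_proj hWs k)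
  have i1 : Integrable (fun x : R3 => P 1 2 0 x - P 2 1 0 x) := (hint 1 2 0).sub (hint 2 1 0)
  have i2 : Integrable (fun x : R3 => P 1 2 0 x - P 2 1 0 x + P 2 0 1 x) := i1.add (hint 2 0 1)
  have i3 : Integrable (fun x : R3 => P 1 2 0 x - P 2 1 0 x + P 2 0 1 x - P 0 2 1 x) :=
    i2.sub (hint 0 2 1)
  have i4 : Integrable
      (fun x : R3 => P 1 2 0 x - P 2 1 0 x + P 2 0 1 x - P 0 2 1 x + P 0 1 2 x) :=
    i3.add (hint 0 1 2)
  have key : (∫ x : R3,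
      (P 1 2 0 x - P 2 1 0 x + P 2 0 1 x - P 0 2 1 x + P 0 1 2 x - P 1 0 2 x)) = 0 := by
    rw [integral_sub i4 (hint 1 0 2), integral_add i3 (hint 0 1 2),
      integral_sub i2 (hint 0 2 1), integral_add i1 (hint 2 0 1),
      integral_sub (hint 1 2 0) (hint 2 1 0)]
    simp [hz]
  have hdiff : ∀ x, (∑ i, curl3 V x i * W x i) - (∑ i, V x i * curl3 W x i)
      = P 1 2 0 x - P 2 1 0 x + P 2 0 1 x - P 0 2 1 x + P 0 1 2 x - P 1 0 2 x := by
    intro x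
    have hdV := hV.differentiable one_ne_zero
    have hdW := hW.differentiable one_ne_zero
    simp only [hP, Fin.sum_univ_three, curl3, partialDeriv3,
      Matrix.cons_val_zero, Matrix.cons_val_one, Matrix.head_cons, Matrix.cons_val_two,
      Matrix.tail_cons, fderiv_proj hdV, fderiv_proj hdW]
    ring
  have hA : Integrable (fun x : R3 => ∑ i, curl3 V x i * W x i) :=
    integrable_dot _ _ (curl3_continuous hV) hW.continuous hWs
  have hB : Integrable (fun x : R3 => ∑ i, V x i * curl3 W x i) := by
    have := integrable_dot (curl3 W) V (curl3_continuous hW) hV.continuous hVs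
    refine (this.congr ?_)
    filter_upwards with x
    exact Finset.sum_congr rfl fun i _ => mul_comm _ _
  rw [← sub_eq_zero, ← integral_sub hA hB]
  calc (∫ x : R3, ((∑ i, curl3 V x i * W x i) - ∑ i, V x i * curl3 W x i))
      = ∫ x : R3, (P 1 2 0 x - P 2 1 0 x + P 2 0 1 x - P 0 2 1 x + P 0 1 2 x - P 1 0 2 x) := by
        simp only [hdiff]
    _ = 0 := key

lemma hcs_sub3 {F G : R3 → R3} (hF : HasCompactSupport F) (hG : HasCompactSupport G) :
    HasCompactSupport (F - G) := by
  have hneg : HasCompactSupport (-G) := hG.comp_left (g := fun v : R3 => -v) (by simp)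
  rw [sub_eq_add_neg]
  exact hF.add hneg


set_option maxHeartbeats 2000000

/-- Concrete global reliability identity on ℝ³ (Theorem 4.1 realized with the
actual curl operator): with σ := μ⁻¹ ∇×u and f := ∇×σ + β u, the squared
estimator built from (u_T, σ_T) equals the sum of the squared weighted energy
norms of the two errors. -/
theorem estimator_reliability_identity_R3
    (μ β : (Fin 3 → ℝ) → ℝ) (m₁ b₁ : ℝ) (hm₁ : 0 < m₁) (hb₁ : 0 < b₁)
    (hμ : ContDiff ℝ 1 μ) (hβ : ContDiff ℝ 1 β)
    (hμbd : ∀ x, m₁ ≤ μ x) (hβbd : ∀ x, b₁ ≤ β x)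
    (u uT σT : (Fin 3 → ℝ) → (Fin 3 → ℝ))
    (hu : ContDiff ℝ 2 u) (husupp : HasCompactSupport u)
    (huT : ContDiff ℝ 1 uT) (huTsupp : HasCompactSupport uT)
    (hσT : ContDiff ℝ 1 σT) (hσTsupp : HasCompactSupport σT)
    (σ f : (Fin 3 → ℝ) → (Fin 3 → ℝ))
    (hσdef : σ = fun x => (μ x)⁻¹ • curl3 u x)
    (hfdef : f = fun x => curl3 σ x + β x • u x) :
    (∫ x, (μ x)⁻¹ * (∑ i, (μ x • σT x - curl3 uT x) i ^ 2))
      + (∫ x, (β x)⁻¹ * (∑ i, (curl3 σT x + β x • uT x - f x) i ^ 2))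
    = (∫ x, ((μ x)⁻¹ * (∑ i, (curl3 (u - uT) x) i ^ 2)
              + β x * (∑ i, (u x - uT x) i ^ 2)))
      + (∫ x, ((β x)⁻¹ * (∑ i, (curl3 (σ - σT) x) i ^ 2)
              + μ x * (∑ i, (σ x - σT x) i ^ 2))) := by
  have hμne : ∀ x, μ x ≠ 0 := fun x => (lt_of_lt_of_le hm₁ (hμbd x)).ne'
  have hβne : ∀ x, β x ≠ 0 := fun x => (lt_of_lt_of_le hb₁ (hβbd x)).ne'
  have hσc : ContDiff ℝ 1 σ := by
    rw [hσdef]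
    exact (hμ.inv hμne).smul (curl3_contDiff hu)
  have hσs : HasCompactSupport σ := by
    refine (curl3_hcs husupp).mono' fun x hx => ?_
    by_contra h
    have h0 : curl3 u x = 0 := image_eq_zero_of_notMem_tsupport h
    exact hx (by simp [hσdef, h0])
  have hu1 : ContDiff ℝ 1 u := hu.of_le one_le_two
  have hdc : ContDiff ℝ 1 (u - uT) := hu1.sub huT
  have hds : HasCompactSupport (u - uT) := hcs_sub3 husupp huTsupp
  have hEc : ContDiff ℝ 1 (σ - σT) := hσc.sub hσT
  have hEs : HasCompactSupport (σ - σT) := hcs_sub3 hσs hσTsupp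
  have hcurld : ∀ x, curl3 (u - uT) x = curl3 u x - curl3 uT x :=
    curl3_sub (hu1.differentiable one_ne_zero) (huT.differentiable one_ne_zero)
  have hcurlE : ∀ x, curl3 (σ - σT) x = curl3 σ x - curl3 σT x :=
    curl3_sub (hσc.differentiable one_ne_zero) (hσT.differentiable one_ne_zero)
  have hμσ : ∀ x, ∀ i : Fin 3, μ x * σ x i = curl3 u x i := by
    intro x i
    rw [hσdef]
    simp only [Pi.smul_apply, smul_eq_mul]
    rw [← mul_assoc, mul_inv_cancel₀ (hμne x), one_mul]
  -- pointwise identities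
  have claim1 : ∀ x, (μ x)⁻¹ * (∑ i, (μ x • σT x - curl3 uT x) i ^ 2)
      = ((μ x)⁻¹ * (∑ i, (curl3 (u - uT) x) i ^ 2)
          + μ x * (∑ i, (σ x - σT x) i ^ 2))
        - 2 * (∑ i, (σ x - σT x) i * (curl3 (u - uT) x) i) := by
    intro x
    have hm := hμne x
    simp only [Fin.sum_univ_three, hcurld x, Pi.sub_apply, Pi.smul_apply, smul_eq_mul,
      ← hμσ x 0, ← hμσ x 1, ← hμσ x 2]
    field_simp
    ring
  have claim2 : ∀ x, (β x)⁻¹ * (∑ i, (curl3 σT x + β x • uT x - f x) i ^ 2)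
      = ((β x)⁻¹ * (∑ i, (curl3 (σ - σT) x) i ^ 2)
          + β x * (∑ i, (u x - uT x) i ^ 2))
        + 2 * (∑ i, curl3 (σ - σT) x i * (u x - uT x) i) := by
    intro x
    have hb := hβne x
    simp only [hfdef, Fin.sum_univ_three, hcurlE x, Pi.sub_apply, Pi.add_apply,
      Pi.smul_apply, smul_eq_mul]
    field_simp
    ring
  -- integrability
  have hμinv : Continuous fun x => (μ x)⁻¹ := hμ.continuous.inv₀ hμne
  have hβinv : Continuous fun x => (β x)⁻¹ := hβ.continuous.inv₀ hβne
  have iP1 : Integrable (fun x : R3 => (μ x)⁻¹ * (∑ i, (curl3 (u - uT) x) i ^ 2)) :=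
    integrable_wsq_s15 _ hμinv _ (curl3_continuous hdc) (curl3_hcs hds)
  have iP2 : Integrable (fun x : R3 => β x * (∑ i, (u x - uT x) i ^ 2)) :=
    integrable_wsq_s15 _ hβ.continuous _ (hu1.continuous.sub huT.continuous) hds
  have iP3 : Integrable (fun x : R3 => (β x)⁻¹ * (∑ i, (curl3 (σ - σT) x) i ^ 2)) :=
    integrable_wsq_s15 _ hβinv _ (curl3_continuous hEc) (curl3_hcs hEs)
  have iP4 : Integrable (fun x : R3 => μ x * (∑ i, (σ x - σT x) i ^ 2)) :=
    integrable_wsq_s15 _ hμ.continuous _ (hσc.continuous.sub hσT.continuous) hEs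
  have iQ1 : Integrable (fun x : R3 => ∑ i, (σ x - σT x) i * (curl3 (u - uT) x) i) :=
    integrable_dot _ _ (hσc.continuous.sub hσT.continuous) (curl3_continuous hdc)
      (curl3_hcs hds)
  have iQ2 : Integrable (fun x : R3 => ∑ i, curl3 (σ - σT) x i * (u x - uT x) i) :=
    integrable_dot _ _ (curl3_continuous hEc) (hu1.continuous.sub huT.continuous) hds
  -- adjointness
  have hadj := curl3_adjoint (σ - σT) (u - uT) hEc hdc hEs hds
  simp only [Pi.sub_apply] at hadj
  -- assemble
  have e1 : (∫ x, (μ x)⁻¹ * (∑ i, (μ x • σT x - curl3 uT x) i ^ 2))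
      = ((∫ x, (μ x)⁻¹ * (∑ i, (curl3 (u - uT) x) i ^ 2))
          + ∫ x, μ x * (∑ i, (σ x - σT x) i ^ 2))
        - 2 * ∫ x, ∑ i, (σ x - σT x) i * (curl3 (u - uT) x) i := by
    rw [show (fun x => (μ x)⁻¹ * (∑ i, (μ x • σT x - curl3 uT x) i ^ 2))
        = fun x => ((μ x)⁻¹ * (∑ i, (curl3 (u - uT) x) i ^ 2)
            + μ x * (∑ i, (σ x - σT x) i ^ 2))
          - 2 * (∑ i, (σ x - σT x) i * (curl3 (u - uT) x) i) from funext claim1]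
    have iP14 : Integrable (fun x : R3 => (μ x)⁻¹ * (∑ i, (curl3 (u - uT) x) i ^ 2)
        + μ x * (∑ i, (σ x - σT x) i ^ 2)) := iP1.add iP4
    rw [integral_sub iP14 (iQ1.const_mul 2), integral_add iP1 iP4, integral_const_mul]
  have e2 : (∫ x, (β x)⁻¹ * (∑ i, (curl3 σT x + β x • uT x - f x) i ^ 2))
      = ((∫ x, (β x)⁻¹ * (∑ i, (curl3 (σ - σT) x) i ^ 2))
          + ∫ x, β x * (∑ i, (u x - uT x) i ^ 2))
        + 2 * ∫ x, ∑ i, curl3 (σ - σT) x i * (u x - uT x) i := by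
    rw [show (fun x => (β x)⁻¹ * (∑ i, (curl3 σT x + β x • uT x - f x) i ^ 2))
        = fun x => ((β x)⁻¹ * (∑ i, (curl3 (σ - σT) x) i ^ 2)
            + β x * (∑ i, (u x - uT x) i ^ 2))
          + 2 * (∑ i, curl3 (σ - σT) x i * (u x - uT x) i) from funext claim2]
    have iP32 : Integrable (fun x : R3 => (β x)⁻¹ * (∑ i, (curl3 (σ - σT) x) i ^ 2)
        + β x * (∑ i, (u x - uT x) i ^ 2)) := iP3.add iP2
    rw [integral_add iP32 (iQ2.const_mul 2), integral_add iP3 iP2, integral_const_mul]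
  have e3 : (∫ x, ((μ x)⁻¹ * (∑ i, (curl3 (u - uT) x) i ^ 2)
        + β x * (∑ i, (u x - uT x) i ^ 2)))
      = (∫ x, (μ x)⁻¹ * (∑ i, (curl3 (u - uT) x) i ^ 2))
        + ∫ x, β x * (∑ i, (u x - uT x) i ^ 2) := integral_add iP1 iP2
  have e4 : (∫ x, ((β x)⁻¹ * (∑ i, (curl3 (σ - σT) x) i ^ 2)
        + μ x * (∑ i, (σ x - σT x) i ^ 2)))
      = (∫ x, (β x)⁻¹ * (∑ i, (curl3 (σ - σT) x) i ^ 2))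
        + ∫ x, μ x * (∑ i, (σ x - σT x) i ^ 2) := integral_add iP3 iP4
  have hQeq : (∫ x, ∑ i, curl3 (σ - σT) x i * (u x - uT x) i)
      = ∫ x, ∑ i, (σ x - σT x) i * (curl3 (u - uT) x) i := by
    rw [show (fun x => ∑ i, curl3 (σ - σT) x i * (u x - uT x) i)
        = fun x => ∑ i : Fin 3, curl3 (σ - σT) x i * (u x i - uT x i) from rfl]
    rw [show (fun x => ∑ i, (σ x - σT x) i * (curl3 (u - uT) x) i)
        = fun x => ∑ i : Fin 3, (σ x i - σT x i) * curl3 (u - uT) x i from rfl]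
    exact hadj
  rw [e1, e2, e3, e4, hQeq]
  ring
end
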